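/- arXiv:2506.11500 — 6 statements merged into one kernel-verified Lean document; each statement's English description precedes it below -/
import Mathlib

section
/- Let G be a group of cardinality ℵ₁ such that (i) for every subset A of G of cardinality ℵ₁ we have A^{10120} = G, i.e., every element of G is a product of 10120 elements of A, and (ii) for every countable subgroup H of G there exists g ∈ G with H ∩ gHg^{-1} = {1}. Then every T1 topology on G for which the multiplication map G × G → G is continuous is the discrete topology. -/
/-- Let `G` be a group of cardinality `ℵ₁` such that (i) every subset `A` of cardinality `ℵ₁`
satisfies `A^10120 = G`, and (ii) every countable subgroup `H` admits `g ∈ G` with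
`H ∩ gHg⁻¹ = {1}`. Then every `T1` topology on `G` with continuous multiplication is
discrete. -/
theorem statement7 (G : Type*) [Group G] (hcard : Cardinal.mk G = Cardinal.aleph 1)
    (hShelah : ∀ A : Set G, Cardinal.mk A = Cardinal.aleph 1 → ∀ g : G,
      ∃ f : Fin 10120 → G, (∀ i, f i ∈ A) ∧ (List.ofFn f).prod = g)
    (hmal : ∀ H : Subgroup G, Countable ↥H →
      ∃ g : G, ∀ x : G, x ∈ H → g * x * g⁻¹ ∈ H → x = 1)
    (t : TopologicalSpace G) (hT1 : @T1Space G t)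
    (hmul : @Continuous (G × G) G (@instTopologicalSpaceProd G G t t) t
      (fun p => p.1 * p.2)) :
    t = ⊥ := by
  letI := t
  haveI : ContinuousMul G := ⟨hmul⟩
  by_contra hne
  -- the singleton {1} is not open
  have hnotopen : ¬ IsOpen ({1} : Set G) := by
    intro h1
    apply hne
    apply eq_bot_of_singletons_open
    intro a
    have ha : ({a} : Set G) = (fun x => a⁻¹ * x) ⁻¹' {1} := by
      ext x
      simp [inv_mul_eq_one, eq_comm]
    rw [ha]
    exact (continuous_mul_left a⁻¹).isOpen_preimage _ h1
  -- every open neighborhood of 1 has cardinality ℵ₁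
  have hbig : ∀ V : Set G, IsOpen V → (1 : G) ∈ V →
      Cardinal.mk V = Cardinal.aleph 1 := by
    intro V hV h1V
    by_contra hc
    have hle : Cardinal.mk V < Cardinal.aleph 1 :=
      lt_of_le_of_ne (hcard ▸ Cardinal.mk_set_le V) hc
    have hVcnt : V.Countable := (Cardinal.countable_iff_lt_aleph_one V).mpr hle
    -- the subgroup generated by V is countable
    have hScnt : (V ∪ V⁻¹ : Set G).Countable := by
      refine hVcnt.union ?_
      rw [← Set.image_inv_eq_inv]
      exact hVcnt.image _
    haveI := hScnt.to_subtype
    have hHcnt : Countable ↥(Subgroup.closure V) := by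
      have hsub : (Subgroup.closure V : Set G) ⊆
          Set.range (fun l : List ↥(V ∪ V⁻¹ : Set G) => (l.map Subtype.val).prod) := by
        intro x hx
        have hx' : x ∈ Submonoid.closure (V ∪ V⁻¹ : Set G) := by
          rw [← Subgroup.closure_toSubmonoid]
          exact hx
        obtain ⟨l, hl, hprod⟩ := Submonoid.exists_list_of_mem_closure hx'
        refine ⟨l.pmap (fun a h => (⟨a, h⟩ : ↥(V ∪ V⁻¹ : Set G))) hl, ?_⟩
        simp only [List.map_pmap]
        rw [List.pmap_eq_map, List.map_id']
        exact hprod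
      exact ((Set.countable_range _).mono hsub).to_subtype
    obtain ⟨g, hg⟩ := hmal (Subgroup.closure V) hHcnt
    apply hnotopen
    have hWeq : V ∩ (fun x => g * x * g⁻¹) ⁻¹' V = {1} := by
      apply Set.eq_singleton_iff_unique_mem.mpr
      constructor
      · refine ⟨h1V, ?_⟩
        show g * 1 * g⁻¹ ∈ V
        simpa using h1V
      · rintro x ⟨hx1, hx2⟩
        exact hg x (Subgroup.subset_closure hx1) (Subgroup.subset_closure hx2)
    rw [← hWeq]
    exact hV.inter (((continuous_mul_right g⁻¹).comp (continuous_mul_left g)).isOpen_preimage _ hV)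
  -- small neighborhoods: products of n+1 elements of some open nbhd of 1 stay in U
  have key : ∀ n : ℕ, ∀ U : Set G, IsOpen U → (1 : G) ∈ U →
      ∃ V : Set G, IsOpen V ∧ (1 : G) ∈ V ∧
        ∀ f : Fin (n + 1) → G, (∀ i, f i ∈ V) → (List.ofFn f).prod ∈ U := by
    intro n
    induction n with
    | zero =>
      intro U hU h1
      exact ⟨U, hU, h1, fun f hf => by simpa using hf 0⟩
    | succ n ih =>
      intro U hU h1
      have hpre : IsOpen ((fun p : G × G => p.1 * p.2) ⁻¹' U) := hU.preimage hmul
      obtain ⟨A, B, hA, hB, h1A, h1B, hAB⟩ :=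
        isOpen_prod_iff.mp hpre 1 1 (by simpa using h1)
      obtain ⟨V, hVo, h1V, hVprod⟩ := ih B hB h1B
      refine ⟨A ∩ V, hA.inter hVo, ⟨h1A, h1V⟩, ?_⟩
      intro f hf
      rw [List.ofFn_succ, List.prod_cons]
      exact hAB (⟨(hf 0).1, hVprod (f ∘ Fin.succ) fun i => (hf _).2⟩ :
        (f 0, (List.ofFn (f ∘ Fin.succ)).prod) ∈ A ×ˢ B)
  -- now derive a contradiction
  haveI : Nontrivial G := by
    rw [← Cardinal.one_lt_iff_nontrivial, hcard]
    exact Cardinal.one_lt_aleph0.trans Cardinal.aleph0_lt_aleph_one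
  obtain ⟨g₀, hg₀⟩ := exists_ne (1 : G)
  obtain ⟨V, hVo, h1V, hVprod⟩ := key 10119 {g₀}ᶜ isOpen_compl_singleton
    (by simpa using (Ne.symm hg₀))
  obtain ⟨f, hfV, hfp⟩ := hShelah V (hbig V hVo h1V) g₀
  exact (hVprod f hfV) hfp
end

section
/- Let X be an infinite set, let τ be a topology on Sym(X) for which the multiplication map Sym(X) × Sym(X) → Sym(X) is continuous, and let x ∈ X. Then the set U_{x,x} = {f ∈ Sym(X) : f(x) = x} is τ-open if and only if it is τ-closed. -/
open Topology

theorem Equiv.Perm.inv_apply_self {α : Type*} (f : Equiv.Perm α) (x : α) : f⁻¹ (f x) = x :=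
  Equiv.symm_apply_apply f x

theorem Equiv.Perm.apply_inv_self {α : Type*} (f : Equiv.Perm α) (x : α) : f (f⁻¹ x) = x :=
  Equiv.apply_symm_apply f x

namespace Statement10Aux

open Cardinal

variable {X : Type*}

/-- The swapping function: exchanges `Z \ {z₀}` with its image under the embedding `j`
into `Zᶜ`, fixing everything else. -/
noncomputable def swapFun (Z : Set X) (z₀ : X)
    (j : (Z \ {z₀} : Set X) ↪ (Zᶜ : Set X)) (a : X) : X := by
  classical
  exact
    if h : a ∈ Z \ {z₀} then (j ⟨a, h⟩ : X)
    else if h2 : ∃ b : (Z \ {z₀} : Set X), (j b : X) = a then (h2.choose : X) else a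

lemma swapFun_mem (Z : Set X) (z₀ : X) (j : (Z \ {z₀} : Set X) ↪ (Zᶜ : Set X))
    (a : X) (h : a ∈ Z \ {z₀}) : swapFun Z z₀ j a = (j ⟨a, h⟩ : X) := by
  classical
  simp only [swapFun]
  rw [dif_pos h]

lemma swapFun_not_mem (Z : Set X) (z₀ : X) (j : (Z \ {z₀} : Set X) ↪ (Zᶜ : Set X))
    (a : X) (h : a ∉ Z \ {z₀}) (h2 : ¬ ∃ b : (Z \ {z₀} : Set X), (j b : X) = a) :
    swapFun Z z₀ j a = a := by
  classical
  simp only [swapFun]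
  rw [dif_neg h, dif_neg h2]

lemma swapFun_involutive (Z : Set X) (z₀ : X)
    (j : (Z \ {z₀} : Set X) ↪ (Zᶜ : Set X)) :
    Function.Involutive (swapFun Z z₀ j) := by
  classical
  have hjnot : ∀ b : (Z \ {z₀} : Set X), (j b : X) ∉ Z \ {z₀} := by
    intro b hb
    exact (j b).2 hb.1
  intro a
  by_cases h : a ∈ Z \ {z₀}
  · rw [swapFun_mem Z z₀ j a h]
    have hc : (j ⟨a, h⟩ : X) ∉ Z \ {z₀} := hjnot _
    have h2 : ∃ b : (Z \ {z₀} : Set X), (j b : X) = (j ⟨a, h⟩ : X) := ⟨⟨a, h⟩, rfl⟩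
    have hstep : swapFun Z z₀ j (j ⟨a, h⟩ : X) = (h2.choose : X) := by
      simp only [swapFun]
      rw [dif_neg hc, dif_pos h2]
    rw [hstep]
    have : h2.choose = ⟨a, h⟩ := j.injective (Subtype.ext h2.choose_spec)
    rw [this]
  · by_cases h2 : ∃ b : (Z \ {z₀} : Set X), (j b : X) = a
    · have hstep : swapFun Z z₀ j a = (h2.choose : X) := by
        simp only [swapFun]
        rw [dif_neg h, dif_pos h2]
      rw [hstep, swapFun_mem Z z₀ j _ h2.choose.2]
      have : (⟨(h2.choose : X), h2.choose.2⟩ : (Z \ {z₀} : Set X)) = h2.choose :=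
        Subtype.ext rfl
      rw [this]
      exact h2.choose_spec
    · rw [swapFun_not_mem Z z₀ j a h h2, swapFun_not_mem Z z₀ j a h h2]

/-- Given a set `Z ∋ z₀` whose difference `Z \ {z₀}` embeds into `Zᶜ`, there is a
permutation `g` with `Z ∩ g '' Z = {z₀}`. -/
lemma exists_perm_inter_image (Z : Set X) (z₀ : X) (hz₀ : z₀ ∈ Z)
    (j : (Z \ {z₀} : Set X) ↪ (Zᶜ : Set X)) :
    ∃ g : Equiv.Perm X, Z ∩ (⇑g '' Z) = {z₀} := by
  classical
  refine ⟨(swapFun_involutive Z z₀ j).toPerm _, ?_⟩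
  have hgz : ∀ a, ((swapFun_involutive Z z₀ j).toPerm _) a = swapFun Z z₀ j a :=
    fun a => rfl
  have hψz₀ : swapFun Z z₀ j z₀ = z₀ := by
    apply swapFun_not_mem
    · simp
    · rintro ⟨b, hb⟩
      exact (j b).2 (by rw [hb]; exact hz₀)
  ext c
  simp only [Set.mem_inter_iff, Set.mem_image, Set.mem_singleton_iff]
  constructor
  · rintro ⟨hcZ, a, haZ, hga⟩
    rw [hgz] at hga
    by_cases ha : a ∈ Z \ {z₀}
    · exfalso
      rw [swapFun_mem Z z₀ j a ha] at hga
      have hmem := (j ⟨a, ha⟩).2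
      rw [hga] at hmem
      exact hmem hcZ
    · have haz : a = z₀ := by
        by_contra hne
        exact ha ⟨haZ, hne⟩
      rw [haz, hψz₀] at hga
      exact hga.symm
  · intro hcz
    rw [hcz]
    exact ⟨hz₀, z₀, hz₀, by rw [hgz, hψz₀]⟩

/-- Dichotomy for invariant families of sets: if `P` is stable under intersections and
under images of permutations, and `P Z` holds for some `Z ∋ z₀`, then either `P {x}`
holds, or `Zᶜ` has cardinality `< |X|`. -/
lemma key_dichotomy [Infinite X] (x : X) (P : Set X → Prop)
    (hinter : ∀ Y₁ Y₂ : Set X, P Y₁ → P Y₂ → P (Y₁ ∩ Y₂))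
    (hinv : ∀ (g : Equiv.Perm X) (Y : Set X), P Y → P (⇑g '' Y))
    (Z : Set X) (hZ : P Z) (z₀ : X) (hz₀ : z₀ ∈ Z) :
    P {x} ∨ #(Zᶜ : Set X) < #X := by
  classical
  rcases le_or_gt #(Z \ {z₀} : Set X) #(Zᶜ : Set X) with hle | hlt
  · left
    obtain ⟨j⟩ := (Cardinal.le_def _ _).mp hle
    obtain ⟨g, hg⟩ := exists_perm_inter_image Z z₀ hz₀ j
    have h1 : P {z₀} := by
      have h' := hinter Z (⇑g '' Z) hZ (hinv g Z hZ)
      rwa [hg] at h'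
    have h2 := hinv (Equiv.swap z₀ x) {z₀} h1
    rwa [Set.image_singleton, Equiv.swap_apply_left] at h2
  · right
    exact hlt.trans_le (Cardinal.mk_set_le _)

end Statement10Aux

open Cardinal Statement10Aux

/-- Let `X` be infinite, `t` a topology on `Sym(X)` with continuous multiplication, and
`x ∈ X`. Then `U_{x,x} = {f | f x = x}` is `t`-open iff it is `t`-closed. -/
theorem statement10 {X : Type*} [Infinite X] (t : TopologicalSpace (Equiv.Perm X))
    (hmul : @Continuous (Equiv.Perm X × Equiv.Perm X) (Equiv.Perm X)
      (@instTopologicalSpaceProd _ _ t t) t (fun p => p.1 * p.2)) (x : X) :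
    IsOpen[t] {f : Equiv.Perm X | f x = x} ↔ IsClosed[t] {f : Equiv.Perm X | f x = x} := by
  letI : TopologicalSpace (Equiv.Perm X) := t
  classical
  have hmul' : Continuous (fun p : Equiv.Perm X × Equiv.Perm X => p.1 * p.2) := hmul
  have hl : ∀ g : Equiv.Perm X, Continuous (fun f : Equiv.Perm X => g * f) :=
    fun g => hmul'.comp (continuous_const.prodMk continuous_id)
  have hr : ∀ g : Equiv.Perm X, Continuous (fun f : Equiv.Perm X => f * g) :=
    fun g => hmul'.comp (continuous_id.prodMk continuous_const)
  constructor
  · -- open → closed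
    intro ho
    rw [← isOpen_compl_iff]
    have hU : {f : Equiv.Perm X | f x = x}ᶜ =
        ⋃ (g : Equiv.Perm X) (_ : g x ≠ x),
          (fun f : Equiv.Perm X => g⁻¹ * f) ⁻¹' {f : Equiv.Perm X | f x = x} := by
      ext f
      simp only [Set.mem_compl_iff, Set.mem_setOf_eq, Set.mem_iUnion, Set.mem_preimage,
        Equiv.Perm.mul_apply]
      constructor
      · intro hf
        exact ⟨f, hf, Equiv.Perm.inv_apply_self f x⟩
      · rintro ⟨g, hg, hfg⟩ hfx
        rw [hfx] at hfg
        have h2 := congrArg g hfg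
        rw [Equiv.Perm.apply_inv_self] at h2
        exact hg h2.symm
    rw [hU]
    exact isOpen_iUnion fun g => isOpen_iUnion fun hg => ho.preimage (hl g⁻¹)
  · -- closed → open
    intro hc
    have hSig : IsOpen {f : Equiv.Perm X | f x ≠ x} := by
      have h := hc.isOpen_compl
      have : {f : Equiv.Perm X | f x = x}ᶜ = {f : Equiv.Perm X | f x ≠ x} := by
        ext f; simp
      rwa [this] at h
    obtain ⟨y, hy⟩ := exists_ne x
    set h₀ : Equiv.Perm X := Equiv.swap x y with hh₀def
    have hmem : ((1 : Equiv.Perm X), h₀) ∈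
        (fun p : Equiv.Perm X × Equiv.Perm X => p.1 * p.2) ⁻¹'
          {f : Equiv.Perm X | f x ≠ x} := by
      simp [hh₀def, Equiv.swap_apply_left, hy]
    have hpre : IsOpen ((fun p : Equiv.Perm X × Equiv.Perm X => p.1 * p.2) ⁻¹'
        {f : Equiv.Perm X | f x ≠ x}) := hSig.preimage hmul'
    obtain ⟨A, B, hA, hB, h1A, hh0B, hAB⟩ := isOpen_prod_iff.mp hpre 1 h₀ hmem
    have hsep : ∀ f ∈ A, ∀ h ∈ B, f (h x) ≠ x := by
      intro f hf h hh
      have hm := hAB (Set.mk_mem_prod hf hh)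
      simpa [Equiv.Perm.mul_apply] using hm
    -- the two "quotient" open-set predicates on X
    set PA : Set X → Prop := fun Y => IsOpen {f : Equiv.Perm X | f x ∈ Y} with hPAdef
    set PB : Set X → Prop := fun Y => IsOpen {f : Equiv.Perm X | f⁻¹ x ∈ Y} with hPBdef
    have hAinter : ∀ Y₁ Y₂ : Set X, PA Y₁ → PA Y₂ → PA (Y₁ ∩ Y₂) := by
      intro Y₁ Y₂ h1 h2
      have heq : {f : Equiv.Perm X | f x ∈ Y₁ ∩ Y₂} =
          {f : Equiv.Perm X | f x ∈ Y₁} ∩ {f : Equiv.Perm X | f x ∈ Y₂} := rfl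
      show IsOpen {f : Equiv.Perm X | f x ∈ Y₁ ∩ Y₂}
      rw [heq]
      exact h1.inter h2
    have hBinter : ∀ Y₁ Y₂ : Set X, PB Y₁ → PB Y₂ → PB (Y₁ ∩ Y₂) := by
      intro Y₁ Y₂ h1 h2
      have heq : {f : Equiv.Perm X | f⁻¹ x ∈ Y₁ ∩ Y₂} =
          {f : Equiv.Perm X | f⁻¹ x ∈ Y₁} ∩ {f : Equiv.Perm X | f⁻¹ x ∈ Y₂} := rfl
      show IsOpen {f : Equiv.Perm X | f⁻¹ x ∈ Y₁ ∩ Y₂}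
      rw [heq]
      exact h1.inter h2
    have hAinv : ∀ (g : Equiv.Perm X) (Y : Set X), PA Y → PA (⇑g '' Y) := by
      intro g Y h
      have heq : {f : Equiv.Perm X | f x ∈ ⇑g '' Y} =
          (fun f : Equiv.Perm X => g⁻¹ * f) ⁻¹' {f : Equiv.Perm X | f x ∈ Y} := by
        ext f
        simp only [Set.mem_setOf_eq, Set.mem_preimage, Equiv.Perm.mul_apply]
        constructor
        · rintro ⟨b, hb, hgb⟩
          rw [← hgb, Equiv.Perm.inv_apply_self]
          exact hb
        · intro hmem2
          exact ⟨g⁻¹ (f x), hmem2, Equiv.Perm.apply_inv_self g (f x)⟩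
      show IsOpen {f : Equiv.Perm X | f x ∈ ⇑g '' Y}
      rw [heq]
      exact h.preimage (hl g⁻¹)
    have hBinv : ∀ (g : Equiv.Perm X) (Y : Set X), PB Y → PB (⇑g '' Y) := by
      intro g Y h
      have heq : {f : Equiv.Perm X | f⁻¹ x ∈ ⇑g '' Y} =
          (fun f : Equiv.Perm X => f * g) ⁻¹' {f : Equiv.Perm X | f⁻¹ x ∈ Y} := by
        ext f
        simp only [Set.mem_setOf_eq, Set.mem_preimage, mul_inv_rev, Equiv.Perm.mul_apply]
        constructor
        · rintro ⟨b, hb, hgb⟩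
          rw [← hgb, Equiv.Perm.inv_apply_self]
          exact hb
        · intro hmem2
          exact ⟨g⁻¹ (f⁻¹ x), hmem2, Equiv.Perm.apply_inv_self g (f⁻¹ x)⟩
      show IsOpen {f : Equiv.Perm X | f⁻¹ x ∈ ⇑g '' Y}
      rw [heq]
      exact h.preimage (hr g)
    set Z : Set X := (fun h : Equiv.Perm X => h x) '' B with hZdef
    set W : Set X := (fun f : Equiv.Perm X => f⁻¹ x) '' A with hWdef
    have hZopen : PA Z := by
      have heq : {f : Equiv.Perm X | f x ∈ Z} =
          ⋃ (u : Equiv.Perm X) (_ : u x = x),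
            (fun f : Equiv.Perm X => f * u⁻¹) ⁻¹' B := by
        ext f
        simp only [hZdef, Set.mem_setOf_eq, Set.mem_image, Set.mem_iUnion, Set.mem_preimage]
        constructor
        · rintro ⟨h, hh, hhx⟩
          refine ⟨h⁻¹ * f, ?_, ?_⟩
          · show (h⁻¹ * f) x = x
            rw [Equiv.Perm.mul_apply, ← hhx, Equiv.Perm.inv_apply_self]
          · have hgr : f * (h⁻¹ * f)⁻¹ = h := by group
            rw [hgr]
            exact hh
        · rintro ⟨u, hu, hfB⟩
          refine ⟨f * u⁻¹, hfB, ?_⟩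
          have hu' : u⁻¹ x = x := by
            rw [Equiv.Perm.inv_eq_iff_eq]
            exact hu.symm
          show (f * u⁻¹) x = f x
          rw [Equiv.Perm.mul_apply, hu']
      show IsOpen {f : Equiv.Perm X | f x ∈ Z}
      rw [heq]
      exact isOpen_iUnion fun u => isOpen_iUnion fun hu => hB.preimage (hr u⁻¹)
    have hWopen : PB W := by
      have heq : {f : Equiv.Perm X | f⁻¹ x ∈ W} =
          ⋃ (u : Equiv.Perm X) (_ : u x = x),
            (fun f : Equiv.Perm X => u⁻¹ * f) ⁻¹' A := by
        ext f
        simp only [hWdef, Set.mem_setOf_eq, Set.mem_image, Set.mem_iUnion, Set.mem_preimage]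
        constructor
        · rintro ⟨a, ha, hax⟩
          refine ⟨f * a⁻¹, ?_, ?_⟩
          · show (f * a⁻¹) x = x
            have hax' : a⁻¹ x = f⁻¹ x := hax
            rw [Equiv.Perm.mul_apply, hax', Equiv.Perm.apply_inv_self]
          · have hgr : (f * a⁻¹)⁻¹ * f = a := by group
            rw [hgr]
            exact ha
        · rintro ⟨u, hu, hfA⟩
          refine ⟨u⁻¹ * f, hfA, ?_⟩
          show (u⁻¹ * f)⁻¹ x = f⁻¹ x
          rw [mul_inv_rev, inv_inv, Equiv.Perm.mul_apply, hu]
      show IsOpen {f : Equiv.Perm X | f⁻¹ x ∈ W}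
      rw [heq]
      exact isOpen_iUnion fun u => isOpen_iUnion fun hu => hA.preimage (hl u⁻¹)
    have hyZ : y ∈ Z := ⟨h₀, hh0B, by simp [hh₀def, Equiv.swap_apply_left]⟩
    have hxW : x ∈ W := ⟨1, h1A, by simp⟩
    have hdisj : ∀ s : X, s ∈ Z → s ∈ W → False := by
      rintro s ⟨h, hh, hhx⟩ ⟨f, hf, hfx⟩
      apply hsep f hf h hh
      have hhx' : h x = s := hhx
      have hfx' : f⁻¹ x = s := hfx
      rw [hhx', ← hfx', Equiv.Perm.apply_inv_self]
    rcases key_dichotomy x PA hAinter hAinv Z hZopen y hyZ with hPAx | hZsmall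
    · have heq : {f : Equiv.Perm X | f x ∈ ({x} : Set X)} =
          {f : Equiv.Perm X | f x = x} := by
        ext f; simp
      have hopen : IsOpen {f : Equiv.Perm X | f x ∈ ({x} : Set X)} := hPAx
      rwa [heq] at hopen
    rcases key_dichotomy x PB hBinter hBinv W hWopen x hxW with hPBx | hWsmall
    · have heq : {f : Equiv.Perm X | f⁻¹ x ∈ ({x} : Set X)} =
          {f : Equiv.Perm X | f x = x} := by
        ext f
        simp only [Set.mem_setOf_eq, Set.mem_singleton_iff, Equiv.Perm.inv_eq_iff_eq]
        exact eq_comm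
      have hopen : IsOpen {f : Equiv.Perm X | f⁻¹ x ∈ ({x} : Set X)} := hPBx
      rwa [heq] at hopen
    · exfalso
      have hcover : (Zᶜ : Set X) ∪ (Wᶜ : Set X) = Set.univ := by
        ext s
        simp only [Set.mem_union, Set.mem_compl_iff, Set.mem_univ, iff_true]
        by_cases hs : s ∈ Z
        · exact Or.inr fun hw => hdisj s hs hw
        · exact Or.inl hs
      have h1 : #X ≤ #(Zᶜ : Set X) + #(Wᶜ : Set X) := by
        calc #X = #(Set.univ : Set X) := (Cardinal.mk_univ).symm
          _ = #((Zᶜ ∪ Wᶜ : Set X)) := by rw [hcover]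
          _ ≤ #(Zᶜ : Set X) + #(Wᶜ : Set X) := Cardinal.mk_union_le _ _
      have h2 : #(Zᶜ : Set X) + #(Wᶜ : Set X) < #X :=
        Cardinal.add_lt_of_lt (Cardinal.infinite_iff.mp inferInstance) hZsmall hWsmall
      exact absurd (h1.trans_lt h2) (lt_irrefl _)
end

section
/- Let X be an infinite set and let x, y ∈ X with x ≠ y. Then the setwise stabilizer Sym(X)_{{x,y}} = {f ∈ Sym(X) : f({x,y}) = {x,y}} is a closed subset of Sym(X) with respect to the semigroup Zariski topology Z(Sym(X)). -/
open Topology TopologicalSpace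

/-- Evaluation of the semigroup polynomial `a₀ x a₁ x ⋯ x aₙ`, encoded by its first
coefficient `a` and the list `l = [a₁, …, aₙ]` of remaining coefficients
(so the degree is `l.length`). -/
def sgEval {M : Type*} [Monoid M] (x a : M) (l : List M) : M :=
  a * (l.map (fun b => x * b)).prod

/-- The semigroup Zariski topology `Z(M)`, generated by the sets
`{x | f x ≠ g x}` with `f, g` semigroup polynomials. -/
def sgZariski (M : Type*) [Monoid M] : TopologicalSpace M :=
  generateFrom {U | ∃ (a : M) (l : List M) (b : M) (m : List M),
    U = {x | sgEval x a l ≠ sgEval x b m}}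

/-- The bounded semigroup Zariski topology `Z_n(M)`, generated by the sets
`{x | f x ≠ g x}` with `f, g` semigroup polynomials of degree at most `n`. -/
def sgZariskiLe (M : Type*) [Monoid M] (n : ℕ) : TopologicalSpace M :=
  generateFrom {U | ∃ (a : M) (l : List M) (b : M) (m : List M),
    l.length ≤ n ∧ m.length ≤ n ∧ U = {x | sgEval x a l ≠ sgEval x b m}}

/-- Evaluation of the group polynomial `a₀ x^{ε₁} a₁ ⋯ x^{εₙ} aₙ`, encoded by its first
coefficient `a` and the list `l = [(ε₁,a₁), …, (εₙ,aₙ)]`, where `true` stands for the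
exponent `1` and `false` for the exponent `-1` (so the degree is `l.length`). -/
def gpEval {G : Type*} [Group G] (x a : G) (l : List (Bool × G)) : G :=
  a * (l.map (fun p => (if p.1 then x else x⁻¹) * p.2)).prod

/-- The group Zariski topology `Z±(G)`, generated by the sets `{x | f x ≠ 1}`
with `f` a group polynomial. -/
def gpZariski (G : Type*) [Group G] : TopologicalSpace G :=
  generateFrom {U | ∃ (a : G) (l : List (Bool × G)), U = {x | gpEval x a l ≠ 1}}

/-- The bounded group Zariski topology `Z±_n(G)`, generated by the sets `{x | f x ≠ 1}`
with `f` a group polynomial of degree at most `n`. -/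
def gpZariskiLe (G : Type*) [Group G] (n : ℕ) : TopologicalSpace G :=
  generateFrom {U | ∃ (a : G) (l : List (Bool × G)), l.length ≤ n ∧ U = {x | gpEval x a l ≠ 1}}

/-- For an infinite set `X` and distinct `x, y ∈ X`, the setwise stabilizer of `{x,y}` is
closed in the semigroup Zariski topology on `Sym(X)`. -/
theorem statement11 {X : Type*} [Infinite X] (x y : X) (hxy : x ≠ y) :
    IsClosed[sgZariski (Equiv.Perm X)]
      {f : Equiv.Perm X | (fun a => f a) '' {x, y} = {x, y}} := by
  classical
  set t := Equiv.swap x y with ht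
  have key : {f : Equiv.Perm X | (fun a => f a) '' {x, y} = {x, y}}
      = {f : Equiv.Perm X | sgEval f 1 [t] = sgEval f t [1]} := by
    ext f
    simp only [Set.mem_setOf_eq, sgEval, List.map_cons, List.map_nil, List.prod_cons,
      List.prod_nil, mul_one, one_mul, Set.image_pair]
    constructor
    · intro h
      rcases Set.pair_eq_pair_iff.mp h with ⟨h1, h2⟩ | ⟨h1, h2⟩
      · ext z
        simp only [Equiv.Perm.mul_apply]
        by_cases hzx : z = x
        · subst hzx
          rw [ht, Equiv.swap_apply_left, h2, h1, Equiv.swap_apply_left]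
        by_cases hzy : z = y
        · subst hzy
          rw [ht, Equiv.swap_apply_right, h1, h2, Equiv.swap_apply_right]
        · have hfx : f z ≠ x := fun hc => hzx (f.injective (by rw [hc, h1]))
          have hfy : f z ≠ y := fun hc => hzy (f.injective (by rw [hc, h2]))
          rw [ht, Equiv.swap_apply_of_ne_of_ne hzx hzy,
            Equiv.swap_apply_of_ne_of_ne hfx hfy]
      · ext z
        simp only [Equiv.Perm.mul_apply]
        by_cases hzx : z = x
        · subst hzx
          rw [ht, Equiv.swap_apply_left, h2, h1, Equiv.swap_apply_right]
        by_cases hzy : z = y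
        · subst hzy
          rw [ht, Equiv.swap_apply_right, h1, h2, Equiv.swap_apply_left]
        · have hfx : f z ≠ y := fun hc => hzx (f.injective (by rw [hc, h1]))
          have hfy : f z ≠ x := fun hc => hzy (f.injective (by rw [hc, h2]))
          rw [ht, Equiv.swap_apply_of_ne_of_ne hzx hzy,
            Equiv.swap_apply_of_ne_of_ne hfy hfx]
    · intro h
      have hx : f (t x) = t (f x) := by
        have := congrArg (fun g : Equiv.Perm X => g x) h
        simpa [Equiv.Perm.mul_apply] using this
      rw [ht, Equiv.swap_apply_left] at hx
      by_cases hfx : f x = x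
      · rw [hfx, Equiv.swap_apply_left] at hx
        rw [hfx, hx]
      by_cases hfy : f x = y
      · rw [hfy, Equiv.swap_apply_right] at hx
        rw [hfy, hx, Set.pair_comm]
      · rw [Equiv.swap_apply_of_ne_of_ne hfx hfy] at hx
        exact absurd (f.injective hx.symm) hxy
  rw [key, ← @isOpen_compl_iff _ _ (sgZariski (Equiv.Perm X))]
  rw [Set.compl_setOf]
  exact TopologicalSpace.isOpen_generateFrom_of_mem ⟨1, [t], t, [1], rfl⟩
end

section
/- Let X be an infinite set and x ∈ X. Then U_{x,x} = {f ∈ Sym(X) : f(x) = x} is a maximal subsemigroup of Sym(X): for all f, g ∈ Sym(X) ∖ U_{x,x} there exist u, v ∈ U_{x,x} with g = u·f·v; in particular, for every f ∈ Sym(X) ∖ U_{x,x}, the subsemigroup of Sym(X) generated by U_{x,x} ∪ {f} is all of Sym(X). -/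
/-- For an infinite set `X` and `x ∈ X`, the stabilizer `U_{x,x} = {f ∈ Sym(X) | f x = x}` is
a maximal subsemigroup of `Sym(X)`: any `g ∉ U_{x,x}` is a product `u * f * v` with
`u, v ∈ U_{x,x}`, for any fixed `f ∉ U_{x,x}`; in particular the subsemigroup generated by
`U_{x,x} ∪ {f}` is all of `Sym(X)`. -/
theorem statement13 {X : Type*} [Infinite X] (x : X) :
    (∀ f g : Equiv.Perm X, f x ≠ x → g x ≠ x →
      ∃ u v : Equiv.Perm X, u x = x ∧ v x = x ∧ g = u * f * v) ∧
    (∀ f : Equiv.Perm X, f x ≠ x →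
      Subsemigroup.closure ({h : Equiv.Perm X | h x = x} ∪ {f}) = ⊤) := by
  have key : ∀ f g : Equiv.Perm X, f x ≠ x → g x ≠ x →
      ∃ u v : Equiv.Perm X, u x = x ∧ v x = x ∧ g = u * f * v := by
    intro f g hf hg
    classical
    have ha : g⁻¹ x ≠ x := fun h => hg (by conv_lhs => rw [← h]; simp)
    have hb : f⁻¹ x ≠ x := fun h => hf (by conv_lhs => rw [← h]; simp)
    set v := Equiv.swap (g⁻¹ x) (f⁻¹ x) with hv
    refine ⟨g * v⁻¹ * f⁻¹, v, ?_, ?_, by group⟩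
    · have : v⁻¹ (f⁻¹ x) = g⁻¹ x := by
        rw [hv, Equiv.swap_inv, Equiv.swap_apply_right]
      rw [Equiv.Perm.mul_apply, Equiv.Perm.mul_apply, this]
      exact g.apply_symm_apply x
    · exact Equiv.swap_apply_of_ne_of_ne (Ne.symm ha) (Ne.symm hb)
  refine ⟨key, fun f hf => ?_⟩
  rw [eq_top_iff]
  intro g _
  by_cases hg : g x = x
  · exact Subsemigroup.subset_closure (Or.inl hg)
  · obtain ⟨u, v, hu, hv, heq⟩ := key f g hf hg
    rw [heq]
    exact mul_mem (mul_mem (Subsemigroup.subset_closure (Or.inl hu))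
      (Subsemigroup.subset_closure (Or.inr rfl))) (Subsemigroup.subset_closure (Or.inl hv))
end

section
/- Let X be a set and let G be an infinite subgroup of Sym(X) with no algebraicity. Then the semigroup Zariski topology Z(G) is not Hausdorff, and the multiplication map G × G → G is not continuous when G carries Z(G) and G × G carries the product topology. -/
open Topology TopologicalSpace

/-- A subgroup `G ≤ Sym(X)` has no algebraicity if for every finite `S ⊆ X` and every
`q ∈ X \ S`, the set `{g q | g ∈ G, g fixes S pointwise}` is infinite. -/
def NoAlgebraicity {X : Type*} (G : Subgroup (Equiv.Perm X)) : Prop :=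
  ∀ S : Finset X, ∀ q : X, q ∉ S →
    {a : X | ∃ g ∈ G, (∀ x ∈ S, g x = x) ∧ g q = a}.Infinite


namespace S17

/-- reversed-list evaluation of a semigroup polynomial -/
def REv {M : Type*} [Monoid M] (x a : M) : List M → M
  | [] => a
  | c :: r => REv x a r * (x * c)

lemma sgEval_append {M : Type*} [Monoid M] (x a c : M) (l : List M) :
    sgEval x a (l ++ [c]) = sgEval x a l * (x * c) := by
  unfold sgEval
  rw [List.map_append, List.prod_append]
  simp [mul_assoc]

lemma sgEval_eq_REv {M : Type*} [Monoid M] (x a : M) (l : List M) :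
    sgEval x a l = REv x a l.reverse := by
  induction l using List.reverseRecOn with
  | nil => simp [sgEval, REv]
  | append_singleton l c ih =>
      rw [sgEval_append, List.reverse_append]
      simp only [List.reverse_cons, List.reverse_nil, List.nil_append, List.singleton_append]
      rw [REv, ih]

lemma sgEval_map {M N : Type*} [Monoid M] [Monoid N] (f : M →* N) (x a : M) (l : List M) :
    f (sgEval x a l) = sgEval (f x) (f a) (l.map f) := by
  unfold sgEval
  rw [map_mul, map_list_prod, List.map_map, List.map_map]
  congr 2
  apply List.map_congr_left
  intro c _
  simp [map_mul]

section Perm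

variable {X : Type*}

def trail (z : Equiv.Perm X) (r : List (Equiv.Perm X)) (p : X) : X :=
  r.foldl (fun q c => z (c q)) p

@[simp] lemma trail_nil (z : Equiv.Perm X) (p : X) : trail z [] p = p := rfl

@[simp] lemma trail_cons (z c : Equiv.Perm X) (r : List (Equiv.Perm X)) (p : X) :
    trail z (c :: r) p = trail z r (z (c p)) := rfl

lemma REv_apply (x a : Equiv.Perm X) (r : List (Equiv.Perm X)) (q : X) :
    REv x a r q = a (trail x r q) := by
  induction r generalizing q with
  | nil => rfl
  | cons c r ih =>
      show (REv x a r * (x * c)) q = _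
      rw [Equiv.Perm.mul_apply, Equiv.Perm.mul_apply, trail_cons, ih]

end Perm

section NormF

variable {M : Type*}

def normF [DecidableEq M] : List M → List M → List M × List M
  | c :: r, c' :: s => if c = c' then normF r s else (c :: r, c' :: s)
  | r, s => (r, s)

variable [DecidableEq M]

lemma normF_nil_left (s : List M) : normF ([] : List M) s = ([], s) := by
  cases s <;> rfl

lemma normF_nil_right (r : List M) : normF r ([] : List M) = (r, []) := by
  cases r <;> rfl

lemma normF_cons_cons (c c' : M) (r s : List M) :
    normF (c :: r) (c' :: s) = if c = c' then normF r s else (c :: r, c' :: s) := rfl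

lemma normF_shape (r s : List M) :
    ((normF r s).1 = [] ∧ (normF r s).2 = []) ∨
    (∃ c r', (normF r s).1 = c :: r' ∧ (normF r s).2 = []) ∨
    (∃ c s', (normF r s).1 = [] ∧ (normF r s).2 = c :: s') ∨
    (∃ c r' c' s', (normF r s).1 = c :: r' ∧ (normF r s).2 = c' :: s' ∧ c ≠ c') := by
  induction r generalizing s with
  | nil =>
      rw [normF_nil_left]
      cases s with
      | nil => exact Or.inl ⟨rfl, rfl⟩
      | cons c s => exact Or.inr (Or.inr (Or.inl ⟨c, s, rfl, rfl⟩))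
  | cons c r ih =>
      cases s with
      | nil =>
          rw [normF_nil_right]
          exact Or.inr (Or.inl ⟨c, r, rfl, rfl⟩)
      | cons c' s =>
          rw [normF_cons_cons]
          by_cases h : c = c'
          · rw [if_pos h]; exact ih s
          · rw [if_neg h]
            exact Or.inr (Or.inr (Or.inr ⟨c, r, c', s, rfl, rfl, h⟩))

lemma normF_mem_left (r s : List M) : ∀ e ∈ (normF r s).1, e ∈ r := by
  induction r generalizing s with
  | nil => rw [normF_nil_left]; intro e he; exact he
  | cons c r ih =>
      cases s with
      | nil => rw [normF_nil_right]; intro e he; exact he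
      | cons c' s =>
          rw [normF_cons_cons]
          by_cases h : c = c'
          · rw [if_pos h]
            intro e he
            exact List.mem_cons_of_mem _ (ih s e he)
          · rw [if_neg h]; intro e he; exact he

lemma normF_mem_right (r s : List M) : ∀ e ∈ (normF r s).2, e ∈ s := by
  induction r generalizing s with
  | nil => rw [normF_nil_left]; intro e he; exact he
  | cons c r ih =>
      cases s with
      | nil => rw [normF_nil_right]; intro e he; simp at he
      | cons c' s =>
          rw [normF_cons_cons]
          by_cases h : c = c'
          · rw [if_pos h]
            intro e he
            exact List.mem_cons_of_mem _ (ih s e he)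
          · rw [if_neg h]; intro e he; exact he

end NormF

lemma normF_eq_iff {M : Type*} [Group M] [DecidableEq M] (w a b : M) (r s : List M) :
    (REv w a r = REv w b s) ↔
      (REv w a (normF r s).1 = REv w b (normF r s).2) := by
  induction r generalizing s with
  | nil => rw [normF_nil_left]
  | cons c r ih =>
      cases s with
      | nil => rw [normF_nil_right]
      | cons c' s =>
          rw [normF_cons_cons]
          by_cases h : c = c'
          · rw [if_pos h]
            rw [← ih s]
            subst h
            show REv w a r * (w * c) = REv w b s * (w * c) ↔ _
            exact mul_left_inj _
          · rw [if_neg h]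

end S17

namespace S17

section Machine

variable {X : Type*} [DecidableEq X] (G : Subgroup (Equiv.Perm X))
variable (CC : Finset (Equiv.Perm X)) (Q0 : Finset X)

/-- construction state: current permutation, committed pairs, forward cores, backward cores -/
structure MSt (X : Type*) where
  z : Equiv.Perm X
  P : Finset (X × X)
  Cf : Finset X
  Cb : Finset X

def Agrees (z' : Equiv.Perm X) (P : Finset (X × X)) : Prop := ∀ pr ∈ P, z' pr.1 = pr.2

lemma Agrees.mono {z' : Equiv.Perm X} {P Q : Finset (X × X)} (h : Agrees z' Q) (hPQ : P ⊆ Q) :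
    Agrees z' P := fun pr hpr => h pr (hPQ hpr)

def Inv (S : MSt X) : Prop :=
  S.z ∈ G ∧ Agrees S.z S.P ∧
  (∀ pr ∈ S.P,
    (pr.2 ∈ S.Cf ∧ (pr.1 ∈ Q0 ∨ ∃ c ∈ CC, ∃ ζ ∈ S.Cf, pr.1 = c ζ)) ∨
    (pr.1 ∈ S.Cb ∧ (pr.2 ∈ Q0 ∨ ∃ c ∈ CC, ∃ ζ ∈ S.Cb, pr.2 = c ζ))) ∧
  (∀ ζ ∈ S.Cf ∪ S.Cb, ∀ ζ' ∈ S.Cf ∪ S.Cb, ζ ≠ ζ' →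
      ∀ c ∈ CC, ∀ c' ∈ CC, c ζ ≠ c' ζ') ∧
  (∀ ζ ∈ S.Cf ∪ S.Cb, ∀ q ∈ Q0, ∀ c ∈ CC, ∀ c' ∈ CC, c ζ ≠ c' q) ∧
  Disjoint S.Cf S.Cb

def Ext (S T : MSt X) : Prop := S.P ⊆ T.P ∧ S.Cf ⊆ T.Cf ∧ S.Cb ⊆ T.Cb

lemma Ext.refl (S : MSt X) : Ext S S := ⟨Finset.Subset.refl _, Finset.Subset.refl _, Finset.Subset.refl _⟩

lemma Ext.trans {S T U : MSt X} (h1 : Ext S T) (h2 : Ext T U) : Ext S U :=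
  ⟨h1.1.trans h2.1, h1.2.1.trans h2.2.1, h1.2.2.trans h2.2.2⟩

variable {G CC Q0}

lemma pairUnique {S : MSt X} (hS : Inv G CC Q0 S) {u u' t : X}
    (h1 : (u, t) ∈ S.P) (h2 : (u', t) ∈ S.P) : u = u' := by
  have e1 := hS.2.1 _ h1
  have e2 := hS.2.1 _ h2
  exact S.z.injective (by simp only at e1 e2; rw [e1, e2])

lemma pairFun {S : MSt X} (hS : Inv G CC Q0 S) {u t t' : X}
    (h1 : (u, t) ∈ S.P) (h2 : (u, t') ∈ S.P) : t = t' := by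
  have e1 := hS.2.1 _ h1
  have e2 := hS.2.1 _ h2
  simp only at e1 e2
  rw [← e1, ← e2]

/-- a fresh move from no-algebraicity -/
lemma freshMove (hna : NoAlgebraicity G) (C F : Finset X) (w : X) (hw : w ∉ C) :
    ∃ y : Equiv.Perm X, y ∈ G ∧ (∀ x ∈ C, y x = x) ∧ y w ∉ F := by
  obtain ⟨a, ⟨g, hgG, hfix, hgw⟩, haF⟩ := (hna C w hw).exists_notMem_finset F
  exact ⟨g, hgG, hfix, by rwa [hgw]⟩

/-- the forward commit: extend the committed pairs at a new domain point `u`,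
with a fresh value avoiding all `CC`-relations with cores, `Q0`, and `Extra`. -/
lemma commitF (hna : NoAlgebraicity G) (hCC1 : (1 : Equiv.Perm X) ∈ CC)
    (S : MSt X) (hS : Inv G CC Q0 S) (u : X) (hu : ∀ t, (u, t) ∉ S.P)
    (hshape : u ∈ Q0 ∨ ∃ c ∈ CC, ∃ ζ ∈ S.Cf, u = c ζ) (Extra : Finset X) :
    ∃ T : MSt X, Inv G CC Q0 T ∧ Ext S T ∧ T.Cb = S.Cb ∧
      ∃ t, T.P = insert (u, t) S.P ∧ T.Cf = insert t S.Cf ∧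
        (∀ c ∈ CC, ∀ c' ∈ CC, ∀ w ∈ S.Cf ∪ S.Cb ∪ Q0 ∪ Extra, c t ≠ c' w) := by
  classical
  obtain ⟨hzG, hag, hsh, hi3, hi4, hdisj⟩ := hS
  -- the value of z at u is not among committed values
  have hzu : S.z u ∉ S.P.image Prod.snd := by
    intro hmem
    obtain ⟨pr, hpr, heq⟩ := Finset.mem_image.1 hmem
    have : pr.1 = u := S.z.injective (by rw [hag pr hpr, heq])
    exact hu pr.2 (by rw [← this]; exact hpr)
  -- avoid set
  set B : Finset X := S.Cf ∪ S.Cb ∪ Q0 ∪ Extra with hB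
  set F : Finset X := CC.biUnion fun c => CC.biUnion fun c' => B.image fun w => c⁻¹ (c' w) with hF
  obtain ⟨y, hyG, hyfix, hyF⟩ := freshMove hna (S.P.image Prod.snd) F (S.z u) hzu
  set ν : X := y (S.z u) with hν
  have hνrel : ∀ c ∈ CC, ∀ c' ∈ CC, ∀ w ∈ B, c ν ≠ c' w := by
    intro c hc c' hc' w hw heq
    apply hyF
    rw [hF]
    apply Finset.mem_biUnion.2 ⟨c, hc, _⟩
    apply Finset.mem_biUnion.2 ⟨c', hc', _⟩
    apply Finset.mem_image.2 ⟨w, hw, _⟩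
    rw [← heq]
    simp
  have hCfB : S.Cf ⊆ B := ((Finset.subset_union_left.trans Finset.subset_union_left).trans Finset.subset_union_left)
  have hCbB : S.Cb ⊆ B := ((Finset.subset_union_right.trans Finset.subset_union_left).trans Finset.subset_union_left)
  have hQ0B : Q0 ⊆ B := (Finset.subset_union_right.trans Finset.subset_union_left)
  have hνnB : ν ∉ B := by
    intro hmem
    exact hνrel 1 hCC1 1 hCC1 ν hmem rfl
  have hνCf : ν ∉ S.Cf := fun h => hνnB (hCfB h)
  have hνCb : ν ∉ S.Cb := fun h => hνnB (hCbB h)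
  refine ⟨⟨y * S.z, insert (u, ν) S.P, insert ν S.Cf, S.Cb⟩, ⟨?_, ?_, ?_, ?_, ?_, ?_⟩,
    ⟨Finset.subset_insert _ _, Finset.subset_insert _ _, Finset.Subset.refl _⟩, rfl,
    ν, rfl, rfl, ?_⟩
  · exact mul_mem hyG hzG
  · intro pr hpr
    rcases Finset.mem_insert.1 hpr with h | h
    · subst h; simp; rfl
    · have := hag pr h
      show (y * S.z) pr.1 = pr.2
      rw [Equiv.Perm.mul_apply, this]
      exact hyfix pr.2 (Finset.mem_image.2 ⟨pr, h, rfl⟩)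
  · intro pr hpr
    rcases Finset.mem_insert.1 hpr with h | h
    · subst h
      refine Or.inl ⟨Finset.mem_insert_self _ _, ?_⟩
      rcases hshape with h' | ⟨c, hc, ζ, hζ, he⟩
      · exact Or.inl h'
      · exact Or.inr ⟨c, hc, ζ, Finset.mem_insert_of_mem hζ, he⟩
    · rcases hsh pr h with ⟨h1, h2⟩ | ⟨h1, h2⟩
      · refine Or.inl ⟨Finset.mem_insert_of_mem h1, ?_⟩
        rcases h2 with h' | ⟨c, hc, ζ, hζ, he⟩
        · exact Or.inl h'
        · exact Or.inr ⟨c, hc, ζ, Finset.mem_insert_of_mem hζ, he⟩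
      · exact Or.inr ⟨h1, h2⟩
  · -- i3
    intro ζ hζ ζ' hζ' hne c hc c' hc'
    have hcase : ∀ ξ : X, ξ ∈ insert ν S.Cf ∪ S.Cb → ξ = ν ∨ ξ ∈ S.Cf ∪ S.Cb := by
      intro ξ hξ
      rcases Finset.mem_union.1 hξ with h | h
      · rcases Finset.mem_insert.1 h with h | h
        · exact Or.inl h
        · exact Or.inr (Finset.mem_union.2 (Or.inl h))
      · exact Or.inr (Finset.mem_union.2 (Or.inr h))
    rcases hcase ζ hζ with rfl | hζ2
    · rcases hcase ζ' hζ' with rfl | hζ2'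
      · exact absurd rfl hne
      · exact hνrel c hc c' hc' ζ' (Finset.union_subset hCfB hCbB hζ2')
    · rcases hcase ζ' hζ' with rfl | hζ2'
      · intro heq
        exact hνrel c' hc' c hc ζ (Finset.union_subset hCfB hCbB hζ2) heq.symm
      · exact hi3 ζ hζ2 ζ' hζ2' hne c hc c' hc'
  · -- i4
    intro ζ hζ q hq c hc c' hc'
    rcases Finset.mem_union.1 hζ with h | h
    · rcases Finset.mem_insert.1 h with rfl | h
      · exact hνrel c hc c' hc' q (hQ0B hq)
      · exact hi4 ζ (Finset.mem_union.2 (Or.inl h)) q hq c hc c' hc'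
    · exact hi4 ζ (Finset.mem_union.2 (Or.inr h)) q hq c hc c' hc'
  · -- disjoint
    rw [Finset.disjoint_insert_left]
    exact ⟨hνCb, hdisj⟩
  · exact hνrel

end Machine

end S17

namespace S17

section Machine2

variable {X : Type*} [DecidableEq X] {G : Subgroup (Equiv.Perm X)}
variable {CC : Finset (Equiv.Perm X)} {Q0 : Finset X}

lemma i3f {S : MSt X} (hS : Inv G CC Q0 S) {ζ ζ' : X} {c c' : Equiv.Perm X}
    (h1 : ζ ∈ S.Cf) (h2 : ζ' ∈ S.Cf) (hne : ζ ≠ ζ') (hc : c ∈ CC) (hc' : c' ∈ CC) :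
    c ζ ≠ c' ζ' :=
  hS.2.2.2.1 ζ (Finset.mem_union_left _ h1) ζ' (Finset.mem_union_left _ h2) hne c hc c' hc'

lemma i4f {S : MSt X} (hS : Inv G CC Q0 S) {ζ q : X} {c c' : Equiv.Perm X}
    (h1 : ζ ∈ S.Cf) (hq : q ∈ Q0) (hc : c ∈ CC) (hc' : c' ∈ CC) :
    c ζ ≠ c' q :=
  hS.2.2.2.2.1 ζ (Finset.mem_union_left _ h1) q hq c hc c' hc'

/-- a committed pair whose first coordinate is reachable from a forward core has
its value a forward core -/
lemma valueCore (hCC1 : (1 : Equiv.Perm X) ∈ CC) {S : MSt X} (hS : Inv G CC Q0 S)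
    {c : Equiv.Perm X} {ζ t : X} (hc : c ∈ CC) (hζ : ζ ∈ S.Cf) (hp : (c ζ, t) ∈ S.P) :
    t ∈ S.Cf := by
  rcases hS.2.2.1 _ hp with ⟨h1, _⟩ | ⟨h1, _⟩
  · exact h1
  · -- (c ζ) ∈ S.Cb : impossible
    exfalso
    by_cases he : ζ = c ζ
    · have : ζ ∈ S.Cb := he ▸ h1
      exact (Finset.disjoint_left.1 hS.2.2.2.2.2 hζ) this
    · exact hS.2.2.2.1 ζ (Finset.mem_union_left _ hζ) (c ζ) (Finset.mem_union_right _ h1)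
        he c hc 1 hCC1 (by rw [Equiv.Perm.one_apply])

/-- a point satisfying the freshness relations is never the value of an old pair -/
lemma freshNotSnd (hCC1 : (1 : Equiv.Perm X) ∈ CC) {S : MSt X} (hS : Inv G CC Q0 S) {ν : X}
    (hrel : ∀ c' ∈ CC, ∀ w ∈ S.Cf ∪ S.Cb ∪ Q0, ν ≠ c' w) :
    ∀ u, (u, ν) ∉ S.P := by
  intro u hu
  rcases hS.2.2.1 _ hu with ⟨h1, _⟩ | ⟨_, h2⟩
  · exact hrel 1 hCC1 ν
      (Finset.mem_union_left _ (Finset.mem_union_left _ h1)) (by rw [Equiv.Perm.one_apply])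
  · rcases h2 with h | ⟨c, hc, ζ, hζ, he⟩
    · exact hrel 1 hCC1 ν (Finset.mem_union_right _ h) (by rw [Equiv.Perm.one_apply])
    · exact hrel c hc ζ
        (Finset.mem_union_left _ (Finset.mem_union_right _ hζ)) he

variable (CC Q0)

def Linked (P : Finset (X × X)) (A : Finset X) : Prop :=
  ∀ t ∈ A, ∃ u, (u, t) ∈ P ∧ (u ∈ Q0 ∨ ∃ c ∈ CC, ∃ ζ ∈ A, u = c ζ)

def NoPar (P : Finset (X × X)) (A R : Finset X) : Prop :=
  ∀ t ∈ A, ∀ u, (u, t) ∈ P → ∀ c ∈ CC, ∀ ρ ∈ R, u ≠ c ρ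

variable {CC Q0}

lemma Linked.mono {P P' : Finset (X × X)} {A : Finset X}
    (h : Linked CC Q0 P A) (hPP : P ⊆ P') : Linked CC Q0 P' A :=
  fun t ht => by
    obtain ⟨u, h1, h2⟩ := h t ht
    exact ⟨u, hPP h1, h2⟩

lemma Linked.insert {P : Finset (X × X)} {A : Finset X} {t u : X}
    (h : Linked CC Q0 P A) (hpair : (u, t) ∈ P)
    (hl : u ∈ Q0 ∨ ∃ c ∈ CC, ∃ ζ ∈ A, u = c ζ) :
    Linked CC Q0 P (insert t A) := by
  intro t' ht'
  rcases Finset.mem_insert.1 ht' with rfl | ht'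
  · refine ⟨u, hpair, ?_⟩
    rcases hl with h' | ⟨c, hc, ζ, hζ, he⟩
    · exact Or.inl h'
    · exact Or.inr ⟨c, hc, ζ, Finset.mem_insert_of_mem hζ, he⟩
  · obtain ⟨u', h1, h2⟩ := h t' ht'
    refine ⟨u', h1, ?_⟩
    rcases h2 with h' | ⟨c, hc, ζ, hζ, he⟩
    · exact Or.inl h'
    · exact Or.inr ⟨c, hc, ζ, Finset.mem_insert_of_mem hζ, he⟩

/-- The main run lemma: evaluate one trail through the committed structure. -/
lemma runX (hna : NoAlgebraicity G) (hCC1 : (1 : Equiv.Perm X) ∈ CC)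
    (r : List (Equiv.Perm X)) (hr : ∀ c ∈ r, c ∈ CC) :
    ∀ S : MSt X, Inv G CC Q0 S → ∀ A Prot : Finset X, A ⊆ S.Cf →
    Linked CC Q0 S.P A → Prot ⊆ A →
    ∀ p, p ∈ A → p ∉ Prot → NoPar CC S.P A (insert p Prot) →
    ∃ T : MSt X, Inv G CC Q0 T ∧ Ext S T ∧ T.Cb = S.Cb ∧
      ∃ A' τ, A ⊆ A' ∧ A' ⊆ T.Cf ∧ Linked CC Q0 T.P A' ∧ NoPar CC T.P A' Prot ∧
        τ ∈ A' ∧ ((r = [] ∧ τ = p) ∨ τ ∉ A) ∧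
        ∀ z', Agrees z' T.P → trail z' r p = τ := by
  induction r with
  | nil =>
      intro S hS A Prot hACf hAL hPA p hpA hpP hnp
      refine ⟨S, hS, Ext.refl S, rfl, A, p, Finset.Subset.refl _, hACf, hAL, ?_, hpA,
        Or.inl ⟨rfl, rfl⟩, fun z' _ => rfl⟩
      intro t ht u hu c hc ρ hρ
      exact hnp t ht u hu c hc ρ (Finset.mem_insert_of_mem hρ)
  | cons c r ih =>
      intro S hS A Prot hACf hAL hPA p hpA hpP hnp
      have hc : c ∈ CC := hr c (List.mem_cons_self)
      have hrt : ∀ e ∈ r, e ∈ CC := fun e he => hr e (List.mem_cons_of_mem _ he)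
      have hpCf : p ∈ S.Cf := hACf hpA
      by_cases hrid : ∃ t, (c p, t) ∈ S.P
      · -- RIDE case: the address is already committed
        obtain ⟨t, hpair⟩ := hrid
        have htCf : t ∈ S.Cf := valueCore hCC1 hS hc hpCf hpair
        have htA : t ∉ A := fun htA =>
          hnp t htA (c p) hpair c hc p (Finset.mem_insert_self _ _) rfl
        have hpt : p ≠ t := fun h => htA (h ▸ hpA)
        have hAL₁ : Linked CC Q0 S.P (insert t A) :=
          hAL.insert hpair (Or.inr ⟨c, hc, p, hpA, rfl⟩)
        have hnp₁ : NoPar CC S.P (insert t A) (insert t Prot) := by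
          intro t' ht' u hu c'' hc'' ρ hρ
          rcases Finset.mem_insert.1 ht' with h1 | h1
          · -- t' = t : the pair is (c p, t)
            have hup : u = c p := pairUnique hS (by rw [← h1]; exact hu) hpair
            rcases Finset.mem_insert.1 hρ with h2 | h2
            · rw [hup, h2]
              exact i3f hS hpCf htCf hpt hc hc''
            · rw [hup]
              exact i3f hS hpCf (hACf (hPA h2)) (fun h => hpP (h ▸ h2)) hc hc''
          · -- t' ∈ A : use the link
            rcases Finset.mem_insert.1 hρ with h2 | h2
            · obtain ⟨u₀, hu₀, hl⟩ := hAL t' h1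
              have hu' : u = u₀ := pairUnique hS hu hu₀
              subst hu'
              rw [h2]
              rcases hl with hq | ⟨c₁, hc₁, ζ₁, hζ₁, he⟩
              · intro heq
                exact i4f hS htCf hq hc'' hCC1
                  (by rw [Equiv.Perm.one_apply]; exact heq.symm)
              · rw [he]
                exact i3f hS (hACf hζ₁) htCf (fun h => htA (h ▸ hζ₁)) hc₁ hc''
            · exact hnp t' h1 u hu c'' hc'' ρ (Finset.mem_insert_of_mem h2)
        obtain ⟨T, hT, hExt, hCb, A', τ, hsub, hsubCf, hL', hnp', hτ, hdisj, hstab⟩ :=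
          ih hrt S hS (insert t A) Prot (Finset.insert_subset htCf hACf) hAL₁
            (hPA.trans (Finset.subset_insert _ _)) t (Finset.mem_insert_self _ _)
            (fun h => htA (hPA h)) hnp₁
        refine ⟨T, hT, hExt, hCb, A', τ, (Finset.subset_insert _ _).trans hsub, hsubCf,
          hL', hnp', hτ, ?_, ?_⟩
        · rcases hdisj with ⟨_, rfl⟩ | hτA
          · exact Or.inr htA
          · exact Or.inr fun h => hτA (Finset.mem_insert_of_mem h)
        · intro z' hz'
          rw [trail_cons, hz' _ (hExt.1 hpair)]
          exact hstab z' hz'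
      · -- COMMIT case
        push_neg at hrid
        obtain ⟨S₁, hS₁, hExt₁, hCb₁, ν, hP₁, hCf₁, hνrel⟩ :=
          commitF hna hCC1 S hS (c p) hrid (Or.inr ⟨c, hc, p, hpCf, rfl⟩) ∅
        have hνB : ∀ c' ∈ CC, ∀ w ∈ S.Cf ∪ S.Cb ∪ Q0, ν ≠ c' w := by
          intro c' hc' w hw heq
          exact hνrel 1 hCC1 c' hc' w (Finset.mem_union_left _ hw)
            (by rw [Equiv.Perm.one_apply]; exact heq)
        have hνCf : ν ∉ S.Cf := fun h =>
          hνB 1 hCC1 ν (Finset.mem_union_left _ (Finset.mem_union_left _ h))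
            (by rw [Equiv.Perm.one_apply])
        have hνA : ν ∉ A := fun h => hνCf (hACf h)
        have hνsnd : ∀ u, (u, ν) ∉ S.P := freshNotSnd hCC1 hS hνB
        have hpairν : (c p, ν) ∈ S₁.P := by rw [hP₁]; exact Finset.mem_insert_self _ _
        have hνCf₁ : ν ∈ S₁.Cf := by rw [hCf₁]; exact Finset.mem_insert_self _ _
        have hAL₁ : Linked CC Q0 S₁.P (insert ν A) :=
          (hAL.mono hExt₁.1).insert hpairν (Or.inr ⟨c, hc, p, hpA, rfl⟩)
        have hpν : p ≠ ν := fun h => hνCf (h ▸ hpCf)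
        have hnp₁ : NoPar CC S₁.P (insert ν A) (insert ν Prot) := by
          intro t' ht' u hu c'' hc'' ρ hρ
          have hu' : (u, t') = (c p, ν) ∨ (u, t') ∈ S.P := by
            rw [hP₁] at hu
            exact Finset.mem_insert.1 hu
          rcases hu' with heq | hold
          · -- the new pair
            have hu2 : u = c p := congrArg Prod.fst heq
            rcases Finset.mem_insert.1 hρ with h2 | h2
            · rw [hu2, h2]
              exact i3f hS₁ (hExt₁.2.1 hpCf) hνCf₁ hpν hc hc''
            · rw [hu2]
              exact i3f hS₁ (hExt₁.2.1 hpCf) (hExt₁.2.1 (hACf (hPA h2)))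
                (fun h => hpP (h ▸ h2)) hc hc''
          · -- an old pair
            rcases Finset.mem_insert.1 ht' with h1 | h1
            · exact absurd (by rw [← h1]; exact hold) (hνsnd u)
            · rcases Finset.mem_insert.1 hρ with h2 | h2
              · -- ρ = ν : use the link of t'
                obtain ⟨u₀, hu₀, hl⟩ := hAL t' h1
                have : u = u₀ := pairUnique hS hold hu₀
                subst this
                rw [h2]
                rcases hl with hq | ⟨c₁, hc₁, ζ₁, hζ₁, he⟩
                · intro heq
                  exact i4f hS₁ hνCf₁ hq hc'' hCC1
                    (by rw [Equiv.Perm.one_apply]; exact heq.symm)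
                · rw [he]
                  exact i3f hS₁ (hExt₁.2.1 (hACf hζ₁)) hνCf₁
                    (fun h => hνA (h ▸ hζ₁)) hc₁ hc''
              · exact hnp t' h1 u hold c'' hc'' ρ (Finset.mem_insert_of_mem h2)
        obtain ⟨T, hT, hExt, hCb, A', τ, hsub, hsubCf, hL', hnp', hτ, hdisj, hstab⟩ :=
          ih hrt S₁ hS₁ (insert ν A) Prot
            (Finset.insert_subset hνCf₁ (hACf.trans hExt₁.2.1)) hAL₁
            (hPA.trans (Finset.subset_insert _ _)) ν (Finset.mem_insert_self _ _)
            (fun h => hνA (hPA h)) hnp₁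
        refine ⟨T, hT, hExt₁.trans hExt, hCb₁ ▸ hCb, A', τ,
          (Finset.subset_insert _ _).trans hsub, hsubCf, hL', hnp', hτ, ?_, ?_⟩
        · rcases hdisj with ⟨_, rfl⟩ | hτA
          · exact Or.inr hνA
          · exact Or.inr fun h => hτA (Finset.mem_insert_of_mem h)
        · intro z' hz'
          rw [trail_cons, hz' _ (hExt.1 hpairν)]
          exact hstab z' hz'

end Machine2

end S17

namespace S17

section Stages

variable {X : Type*} [DecidableEq X] {G : Subgroup (Equiv.Perm X)}
variable {CC : Finset (Equiv.Perm X)} {Q0 : Finset X}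

lemma baseStep (hna : NoAlgebraicity G) (hCC1 : (1 : Equiv.Perm X) ∈ CC)
    (S : MSt X) (hS : Inv G CC Q0 S) (u : X) (hu : u ∈ Q0) :
    ∃ T : MSt X, Inv G CC Q0 T ∧ Ext S T ∧ T.Cb = S.Cb ∧
      ∃ t, (u, t) ∈ T.P ∧ t ∈ T.Cf := by
  by_cases h : ∃ t, (u, t) ∈ S.P
  · obtain ⟨t, hp⟩ := h
    refine ⟨S, hS, Ext.refl S, rfl, t, hp, ?_⟩
    rcases hS.2.2.1 _ hp with ⟨h1, _⟩ | ⟨h1, _⟩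
    · exact h1
    · exact absurd rfl
        (hS.2.2.2.2.1 u (Finset.mem_union_right _ h1) u hu 1 hCC1 1 hCC1)
  · push_neg at h
    obtain ⟨T, hT, hE, hCb, t, hP, hCf, _⟩ :=
      commitF hna hCC1 S hS u h (Or.inl hu) ∅
    exact ⟨T, hT, hE, hCb, t, by rw [hP]; exact Finset.mem_insert_self _ _,
      by rw [hCf]; exact Finset.mem_insert_self _ _⟩

lemma stageK3 (hna : NoAlgebraicity G) (hCC1 : (1 : Equiv.Perm X) ∈ CC)
    {a b c c' : Equiv.Perm X} {r s : List (Equiv.Perm X)}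
    (ha : a ∈ CC) (hb : b ∈ CC) (hc : c ∈ CC) (hc' : c' ∈ CC)
    (hrs : ∀ e ∈ r, e ∈ CC) (hss : ∀ e ∈ s, e ∈ CC)
    {q : X} (hq : c q ≠ c' q) (h1 : c q ∈ Q0) (h2 : c' q ∈ Q0)
    (S : MSt X) (hS : Inv G CC Q0 S) :
    ∃ T : MSt X, Inv G CC Q0 T ∧ Ext S T ∧
      ∀ z', Agrees z' T.P → REv z' a (c :: r) ≠ REv z' b (c' :: s) := by
  obtain ⟨S₁, hS₁, hE₁, _, tf, hpf, htf⟩ := baseStep hna hCC1 S hS _ h1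
  obtain ⟨S₂, hS₂, hE₂, _, tg, hpg, htg⟩ := baseStep hna hCC1 S₁ hS₁ _ h2
  have hpf₂ : (c q, tf) ∈ S₂.P := hE₂.1 hpf
  have htf₂ : tf ∈ S₂.Cf := hE₂.2.1 htf
  have htfg : tf ≠ tg := by
    intro h
    apply hq
    have e1 := hS₂.2.1 _ hpf₂
    have e2 := hS₂.2.1 _ hpg
    simp only at e1 e2
    exact S₂.z.injective (by rw [e1, e2, h])
  -- the forward run on the f-side
  have hALf : Linked CC Q0 S₂.P (insert tf {tg}) := by
    intro t' ht'
    rcases Finset.mem_insert.1 ht' with h' | h'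
    · exact ⟨c q, by rw [h']; exact hpf₂, Or.inl h1⟩
    · exact ⟨c' q, by rw [Finset.mem_singleton.1 h']; exact hpg, Or.inl h2⟩
  have hnpf : NoPar CC S₂.P (insert tf {tg}) (insert tf {tg}) := by
    intro t' ht' u hu c'' hc'' ρ hρ
    have hρCf : ρ ∈ S₂.Cf := by
      rcases Finset.mem_insert.1 hρ with h' | h'
      · rw [h']; exact htf₂
      · rw [Finset.mem_singleton.1 h']; exact htg
    have huQ : u ∈ Q0 := by
      rcases Finset.mem_insert.1 ht' with h' | h'
      · have : u = c q := pairUnique hS₂ (by rw [← h']; exact hu) hpf₂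
        rw [this]; exact h1
      · have : u = c' q := pairUnique hS₂
          (by rw [← Finset.mem_singleton.1 h']; exact hu) hpg
        rw [this]; exact h2
    intro heq
    exact i4f hS₂ hρCf huQ hc'' hCC1 (by rw [Equiv.Perm.one_apply]; exact heq.symm)
  obtain ⟨S₃, hS₃, hE₃, _, A₃, τf, hsub₃, hA₃Cf, hL₃, hnp₃, hτf, hdisjf, hstabf⟩ :=
    runX hna hCC1 r hrs S₂ hS₂ (insert tf {tg}) {tg}
      (Finset.insert_subset htf₂ (Finset.singleton_subset_iff.2 htg)) hALf
      (Finset.subset_insert _ _) tf (Finset.mem_insert_self _ _)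
      (fun h => htfg (Finset.mem_singleton.1 h)) hnpf
  -- the forward run on the g-side
  have htgA₃ : tg ∈ A₃ := hsub₃ (Finset.mem_insert_of_mem (Finset.mem_singleton_self _))
  have hnpg : NoPar CC S₃.P A₃ (insert tg ∅) := by
    intro t' ht' u hu c'' hc'' ρ hρ
    rcases Finset.mem_insert.1 hρ with h' | h'
    · exact hnp₃ t' ht' u hu c'' hc'' ρ (by rw [h']; exact Finset.mem_singleton_self _)
    · exact absurd h' (Finset.notMem_empty ρ)
  obtain ⟨S₄, hS₄, hE₄, _, A₄, τg, hsub₄, hA₄Cf, _, _, hτg, hdisjg, hstabg⟩ :=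
    runX hna hCC1 s hss S₃ hS₃ A₃ ∅ hA₃Cf hL₃ (Finset.empty_subset _)
      tg htgA₃ (Finset.notMem_empty _) hnpg
  have hτfg : τf ≠ τg := by
    rcases hdisjg with ⟨_, h'⟩ | h'
    · rw [h']
      rcases hdisjf with ⟨_, h''⟩ | h''
      · rw [h'']; exact htfg
      · exact fun hh => h'' (hh ▸ Finset.mem_insert_of_mem (Finset.mem_singleton_self _))
    · exact fun hh => h' (hh ▸ hτf)
  refine ⟨S₄, hS₄, hE₁.trans (hE₂.trans (hE₃.trans hE₄)), ?_⟩
  intro z' hz' heq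
  have hzf : z' (c q) = tf := hz' _ (hE₄.1 (hE₃.1 hpf₂))
  have hzg : z' (c' q) = tg := hz' _ (hE₄.1 (hE₃.1 hpg))
  have e1 : REv z' a (c :: r) q = a τf := by
    rw [REv_apply, trail_cons, hzf, hstabf z' (hz'.mono hE₄.1)]
  have e2 : REv z' b (c' :: s) q = b τg := by
    rw [REv_apply, trail_cons, hzg, hstabg z' hz']
  have : a τf ≠ b τg :=
    i3f hS₄ (hE₄.2.1 (hA₃Cf hτf)) (hA₄Cf hτg) hτfg ha hb
  apply this
  rw [← e1, ← e2, heq]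

lemma stageK2 (hna : NoAlgebraicity G) (hCC1 : (1 : Equiv.Perm X) ∈ CC)
    {a b c : Equiv.Perm X} {r : List (Equiv.Perm X)}
    (ha : a ∈ CC) (hb : b ∈ CC) (hc : c ∈ CC) (hrs : ∀ e ∈ r, e ∈ CC)
    {q : X} (hq0 : q ∈ Q0) (h1 : c q ∈ Q0)
    (S : MSt X) (hS : Inv G CC Q0 S) :
    ∃ T : MSt X, Inv G CC Q0 T ∧ Ext S T ∧
      ∀ z', Agrees z' T.P → REv z' a (c :: r) ≠ REv z' b [] := by
  obtain ⟨S₁, hS₁, hE₁, _, t, hp, ht⟩ := baseStep hna hCC1 S hS _ h1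
  have hAL : Linked CC Q0 S₁.P {t} := by
    intro t' ht'
    exact ⟨c q, by rw [Finset.mem_singleton.1 ht']; exact hp, Or.inl h1⟩
  have hnp : NoPar CC S₁.P {t} (insert t ∅) := by
    intro t' ht' u hu c'' hc'' ρ hρ
    have : u = c q := pairUnique hS₁ (by rw [← Finset.mem_singleton.1 ht']; exact hu) hp
    have hρCf : ρ ∈ S₁.Cf := by
      rcases Finset.mem_insert.1 hρ with h' | h'
      · rw [h']; exact ht
      · exact absurd h' (Finset.notMem_empty ρ)
    rw [this]
    intro heq
    exact i4f hS₁ hρCf h1 hc'' hCC1 (by rw [Equiv.Perm.one_apply]; exact heq.symm)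
  obtain ⟨S₂, hS₂, hE₂, _, A₂, τ, hsub₂, hA₂Cf, _, _, hτ, _, hstab⟩ :=
    runX hna hCC1 r hrs S₁ hS₁ {t} ∅ (Finset.singleton_subset_iff.2 ht) hAL
      (Finset.empty_subset _) t (Finset.mem_singleton_self _) (Finset.notMem_empty _)
      hnp
  refine ⟨S₂, hS₂, hE₁.trans hE₂, ?_⟩
  intro z' hz' heq
  have hzt : z' (c q) = t := hz' _ (hE₂.1 hp)
  have e1 : REv z' a (c :: r) q = a τ := by
    rw [REv_apply, trail_cons, hzt, hstab z' hz']
  have e2 : REv z' b ([] : List (Equiv.Perm X)) q = b q := by rw [REv_apply, trail_nil]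
  exact i4f hS₂ (hA₂Cf hτ) hq0 ha hb (by rw [← e1, ← e2, heq])

end Stages

end S17

namespace S17

section Master

variable {X : Type*} [DecidableEq X] {G : Subgroup (Equiv.Perm X)}
variable {CC : Finset (Equiv.Perm X)} {Q0 : Finset X}

def MSt.swap (S : MSt X) : MSt X := ⟨S.z⁻¹, S.P.image Prod.swap, S.Cb, S.Cf⟩

lemma mem_swapP {S : MSt X} {x y : X} : (x, y) ∈ (MSt.swap S).P ↔ (y, x) ∈ S.P := by
  constructor
  · intro h
    obtain ⟨pr, hpr, he⟩ := Finset.mem_image.1 h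
    have h1 : pr.2 = x := congrArg Prod.fst he
    have h2 : pr.1 = y := congrArg Prod.snd he
    rw [← h1, ← h2]
    exact hpr
  · intro h
    exact Finset.mem_image.2 ⟨(y, x), h, rfl⟩

lemma Inv.swap {S : MSt X} (hS : Inv G CC Q0 S) : Inv G CC Q0 (MSt.swap S) := by
  obtain ⟨hzG, hag, hsh, hi3, hi4, hdisj⟩ := hS
  refine ⟨inv_mem hzG, ?_, ?_, ?_, ?_, hdisj.symm⟩
  · intro pr hpr
    have h := mem_swapP.1 (show (pr.1, pr.2) ∈ (MSt.swap S).P from hpr)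
    have := hag _ h
    simp only at this
    show S.z⁻¹ pr.1 = pr.2
    rw [← this]
    exact S.z.symm_apply_apply pr.2
  · intro pr hpr
    have h := mem_swapP.1 (show (pr.1, pr.2) ∈ (MSt.swap S).P from hpr)
    rcases hsh _ h with ⟨h1, h2⟩ | ⟨h1, h2⟩
    · exact Or.inr ⟨h1, h2⟩
    · exact Or.inl ⟨h1, h2⟩
  · intro ζ hζ ζ' hζ' hne c hc c' hc'
    have hu : ∀ ξ : X, ξ ∈ (MSt.swap S).Cf ∪ (MSt.swap S).Cb → ξ ∈ S.Cf ∪ S.Cb := by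
      intro ξ hξ
      rcases Finset.mem_union.1 hξ with h | h
      · exact Finset.mem_union_right _ h
      · exact Finset.mem_union_left _ h
    exact hi3 ζ (hu ζ hζ) ζ' (hu ζ' hζ') hne c hc c' hc'
  · intro ζ hζ q hq c hc c' hc'
    have hu : ζ ∈ S.Cf ∪ S.Cb := by
      rcases Finset.mem_union.1 hζ with h | h
      · exact Finset.mem_union_right _ h
      · exact Finset.mem_union_left _ h
    exact hi4 ζ hu q hq c hc c' hc'

/-- Task: (a, r, b, s, dir). If dir is true, it is an inequation on `z`,
otherwise on `z⁻¹`; the lists are in reversed (REv) convention. -/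
abbrev Task (X : Type*) := Equiv.Perm X × List (Equiv.Perm X) × Equiv.Perm X ×
  List (Equiv.Perm X) × Bool

def THolds (z : Equiv.Perm X) (t : Task X) : Prop :=
  REv (cond t.2.2.2.2 z z⁻¹) t.1 t.2.1 ≠ REv (cond t.2.2.2.2 z z⁻¹) t.2.2.1 t.2.2.2.1

def TConsts (t : Task X) : Prop :=
  t.1 ∈ CC ∧ t.2.2.1 ∈ CC ∧ (∀ e ∈ t.2.1, e ∈ CC) ∧ (∀ e ∈ t.2.2.2.1, e ∈ CC)

def TReady (t : Task X) : Prop :=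
  (t.2.1 = [] ∧ t.2.2.2.1 = [] ∧ t.1 ≠ t.2.2.1) ∨
  (∃ c r' q, t.2.1 = c :: r' ∧ t.2.2.2.1 = [] ∧ q ∈ Q0 ∧ c q ∈ Q0) ∨
  (∃ c s' q, t.2.1 = [] ∧ t.2.2.2.1 = c :: s' ∧ q ∈ Q0 ∧ c q ∈ Q0) ∨
  (∃ c r' c' s' q, t.2.1 = c :: r' ∧ t.2.2.2.1 = c' :: s' ∧ c q ≠ c' q ∧
    c q ∈ Q0 ∧ c' q ∈ Q0)

/-- dispatch one inequation (in the forward variable) -/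
lemma stageAny (hna : NoAlgebraicity G) (hCC1 : (1 : Equiv.Perm X) ∈ CC)
    {a b : Equiv.Perm X} {r s : List (Equiv.Perm X)}
    (ha : a ∈ CC) (hb : b ∈ CC) (hrs : ∀ e ∈ r, e ∈ CC) (hss : ∀ e ∈ s, e ∈ CC)
    (hready : @TReady X Q0 (a, r, b, s, true))
    (S : MSt X) (hS : Inv G CC Q0 S) :
    ∃ T : MSt X, Inv G CC Q0 T ∧ Ext S T ∧
      ∀ z', Agrees z' T.P → REv z' a r ≠ REv z' b s := by
  rcases hready with ⟨h1, h2, h3⟩ | ⟨c, r', q, h1, h2, hq0, hq1⟩ |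
    ⟨c, s', q, h1, h2, hq0, hq1⟩ | ⟨c, r', c', s', q, h1, h2, hne, hq1, hq2⟩
  · simp only at h1 h2 h3
    subst h1; subst h2
    exact ⟨S, hS, Ext.refl S, fun z' _ => h3⟩
  · simp only at h1 h2
    subst h1; subst h2
    have hc : c ∈ CC := hrs c (List.mem_cons_self)
    have hr' : ∀ e ∈ r', e ∈ CC := fun e he => hrs e (List.mem_cons_of_mem _ he)
    exact stageK2 hna hCC1 ha hb hc hr' hq0 hq1 S hS
  · simp only at h1 h2
    subst h1; subst h2
    have hc : c ∈ CC := hss c (List.mem_cons_self)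
    have hs' : ∀ e ∈ s', e ∈ CC := fun e he => hss e (List.mem_cons_of_mem _ he)
    obtain ⟨T, hT, hE, hconc⟩ := stageK2 hna hCC1 hb ha hc hs' hq0 hq1 S hS
    exact ⟨T, hT, hE, fun z' hz' => (hconc z' hz').symm⟩
  · simp only at h1 h2
    subst h1; subst h2
    have hc : c ∈ CC := hrs c (List.mem_cons_self)
    have hr' : ∀ e ∈ r', e ∈ CC := fun e he => hrs e (List.mem_cons_of_mem _ he)
    have hc' : c' ∈ CC := hss c' (List.mem_cons_self)
    have hs' : ∀ e ∈ s', e ∈ CC := fun e he => hss e (List.mem_cons_of_mem _ he)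
    exact stageK3 hna hCC1 ha hb hc hc' hr' hs' hne hq1 hq2 S hS

lemma masterCore (hna : NoAlgebraicity G) (hCC1 : (1 : Equiv.Perm X) ∈ CC)
    (ts : List (Task X)) (hconst : ∀ t ∈ ts, @TConsts X CC t)
    (hready : ∀ t ∈ ts, @TReady X Q0 t) :
    ∀ S : MSt X, Inv G CC Q0 S →
    ∃ T : MSt X, Inv G CC Q0 T ∧ Ext S T ∧
      ∀ t ∈ ts, ∀ z', Agrees z' T.P → THolds z' t := by
  induction ts with
  | nil =>
      intro S hS
      exact ⟨S, hS, Ext.refl S, fun t ht => absurd ht List.not_mem_nil⟩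
  | cons t ts ih =>
      intro S hS
      obtain ⟨a, r, b, s, d⟩ := t
      obtain ⟨ha, hb, hrs, hss⟩ := hconst _ (List.mem_cons_self)
      have hready₀ := hready _ (List.mem_cons_self)
      have hstep : ∃ S₁ : MSt X, Inv G CC Q0 S₁ ∧ Ext S S₁ ∧
          ∀ z', Agrees z' S₁.P → THolds z' (a, r, b, s, d) := by
        cases d with
        | true =>
            obtain ⟨T, hT, hE, hconc⟩ := stageAny hna hCC1 ha hb hrs hss
              (by exact hready₀) S hS
            exact ⟨T, hT, hE, fun z' hz' => hconc z' hz'⟩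
        | false =>
            obtain ⟨T, hT, hE, hconc⟩ := stageAny hna hCC1 ha hb hrs hss
              (by exact hready₀) (MSt.swap S) hS.swap
            refine ⟨MSt.swap T, hT.swap, ?_, ?_⟩
            · refine ⟨?_, hE.2.2, hE.2.1⟩
              intro pr hpr
              exact mem_swapP.2 (hE.1 (mem_swapP.2 (by simpa using hpr)))
            · intro z' hz'
              have hag : Agrees z'⁻¹ T.P := by
                intro pr hpr
                have : z' pr.2 = pr.1 := hz' (pr.2, pr.1) (mem_swapP.2 (by simpa using hpr))
                rw [← this]
                exact z'.symm_apply_apply pr.2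
              exact hconc z'⁻¹ hag
      obtain ⟨S₁, hS₁, hE₁, hconc₁⟩ := hstep
      obtain ⟨T, hT, hE₂, hconc₂⟩ := ih (fun t' ht' => hconst t' (List.mem_cons_of_mem _ ht'))
        (fun t' ht' => hready t' (List.mem_cons_of_mem _ ht')) S₁ hS₁
      refine ⟨T, hT, hE₁.trans hE₂, ?_⟩
      intro t' ht' z' hz'
      rcases List.mem_cons.1 ht' with h' | h'
      · rw [h']
        exact hconc₁ z' (hz'.mono hE₂.1)
      · exact hconc₂ t' h' z' hz'

end Master

end S17

namespace S17

section Wrapper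

open scoped Classical

variable {X : Type*} [DecidableEq X] {G : Subgroup (Equiv.Perm X)}

noncomputable def normTask (t : Task X) : Task X :=
  (t.1, (normF t.2.1 t.2.2.2.1).1, t.2.2.1, (normF t.2.1 t.2.2.2.1).2, t.2.2.2.2)

noncomputable def taskConstSet (t : Task X) : Finset (Equiv.Perm X) :=
  insert t.1 (insert t.2.2.1 (t.2.1.toFinset ∪ t.2.2.2.1.toFinset))

noncomputable def basePts (q₀ : X) (t : Task X) : Finset X :=
  match t.2.1, t.2.2.2.1 with
  | [], [] => ∅
  | c :: _, [] => {q₀, c q₀}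
  | [], c :: _ => {q₀, c q₀}
  | c :: _, c' :: _ =>
      if h : ∃ q, c q ≠ c' q then {h.choose, c h.choose, c' h.choose} else ∅

lemma mem_foldr_union {α β : Type*} [DecidableEq β] (f : α → Finset β) (l : List α)
    (a : α) (ha : a ∈ l) : f a ⊆ l.foldr (fun x acc => f x ∪ acc) ∅ := by
  induction l with
  | nil => exact absurd ha List.not_mem_nil
  | cons x l ih =>
      rcases List.mem_cons.1 ha with h | h
      · rw [h]
        exact Finset.subset_union_left
      · exact (ih h).trans Finset.subset_union_right

lemma master (hna : NoAlgebraicity G) (q₀ : X) (ts : List (Task X))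
    (hsat : ∀ t ∈ ts, ∃ w : Equiv.Perm X, REv w t.1 t.2.1 ≠ REv w t.2.2.1 t.2.2.2.1) :
    ∃ z : Equiv.Perm X, z ∈ G ∧ ∀ t ∈ ts, THolds z t := by
  set nts : List (Task X) := ts.map normTask with hnts
  set Q0 : Finset X := nts.foldr (fun t acc => basePts q₀ t ∪ acc) ∅ with hQ0
  set CC : Finset (Equiv.Perm X) :=
    insert 1 (nts.foldr (fun t acc => taskConstSet t ∪ acc) ∅) with hCC
  have hCC1 : (1 : Equiv.Perm X) ∈ CC := Finset.mem_insert_self _ _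
  have hconst : ∀ t ∈ nts, @TConsts X CC t := by
    intro t ht
    have hsub : taskConstSet t ⊆ CC :=
      (mem_foldr_union taskConstSet nts t ht).trans (Finset.subset_insert _ _)
    refine ⟨hsub (Finset.mem_insert_self _ _),
      hsub (Finset.mem_insert_of_mem (Finset.mem_insert_self _ _)), ?_, ?_⟩
    · intro e he
      exact hsub (Finset.mem_insert_of_mem (Finset.mem_insert_of_mem
        (Finset.mem_union_left _ (List.mem_toFinset.2 he))))
    · intro e he
      exact hsub (Finset.mem_insert_of_mem (Finset.mem_insert_of_mem
        (Finset.mem_union_right _ (List.mem_toFinset.2 he))))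
  have hready : ∀ t ∈ nts, @TReady X Q0 t := by
    intro t' ht'
    obtain ⟨t, ht, rfl⟩ := List.mem_map.1 ht'
    obtain ⟨a, r, b, s, d⟩ := t
    have hbsub : basePts q₀ (normTask (a, r, b, s, d)) ⊆ Q0 :=
      mem_foldr_union (basePts q₀) nts _ ht'
    have hw := hsat _ ht
    rcases normF_shape r s with ⟨h1, h2⟩ | ⟨c, r', h1, h2⟩ | ⟨c, s', h1, h2⟩ |
      ⟨c, r', c', s', h1, h2, hcc⟩
    · -- both empty: a ≠ b
      refine Or.inl ⟨h1, h2, ?_⟩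
      show a ≠ b
      intro hab
      obtain ⟨w, hwne⟩ := hw
      apply hwne
      show REv w a r = REv w b s
      rw [normF_eq_iff, h1, h2]
      exact hab
    · -- K2
      refine Or.inr (Or.inl ⟨c, r', q₀, h1, h2, ?_, ?_⟩)
      · apply hbsub
        show q₀ ∈ basePts q₀ (a, (normF r s).1, b, (normF r s).2, d)
        unfold basePts
        simp only [h1, h2]
        exact Finset.mem_insert_self _ _
      · apply hbsub
        show c q₀ ∈ basePts q₀ (a, (normF r s).1, b, (normF r s).2, d)
        unfold basePts
        simp only [h1, h2]
        exact Finset.mem_insert_of_mem (Finset.mem_singleton_self _)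
    · -- K2 symmetric
      refine Or.inr (Or.inr (Or.inl ⟨c, s', q₀, h1, h2, ?_, ?_⟩))
      · apply hbsub
        show q₀ ∈ basePts q₀ (a, (normF r s).1, b, (normF r s).2, d)
        unfold basePts
        simp only [h1, h2]
        exact Finset.mem_insert_self _ _
      · apply hbsub
        show c q₀ ∈ basePts q₀ (a, (normF r s).1, b, (normF r s).2, d)
        unfold basePts
        simp only [h1, h2]
        exact Finset.mem_insert_of_mem (Finset.mem_singleton_self _)
    · -- K3
      have hex : ∃ q : X, c q ≠ c' q := by
        by_contra hAll
        push_neg at hAll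
        exact hcc (Equiv.ext hAll)
      refine Or.inr (Or.inr (Or.inr ⟨c, r', c', s', hex.choose, h1, h2,
        hex.choose_spec, ?_, ?_⟩))
      · apply hbsub
        show c hex.choose ∈ basePts q₀ (a, (normF r s).1, b, (normF r s).2, d)
        unfold basePts
        simp only [h1, h2]
        rw [dif_pos hex]
        exact Finset.mem_insert_of_mem (Finset.mem_insert_self _ _)
      · apply hbsub
        show c' hex.choose ∈ basePts q₀ (a, (normF r s).1, b, (normF r s).2, d)
        unfold basePts
        simp only [h1, h2]
        rw [dif_pos hex]
        exact Finset.mem_insert_of_mem (Finset.mem_insert_of_mem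
          (Finset.mem_singleton_self _))
  have hS0 : Inv G CC Q0 ⟨1, ∅, ∅, ∅⟩ := by
    refine ⟨Subgroup.one_mem G, ?_, ?_, ?_, ?_, ?_⟩
    · intro pr hpr; exact absurd hpr (Finset.notMem_empty pr)
    · intro pr hpr; exact absurd hpr (Finset.notMem_empty pr)
    · intro ζ hζ; simp at hζ
    · intro ζ hζ; simp at hζ
    · simp
  obtain ⟨T, hT, _, hconc⟩ := masterCore hna hCC1 nts hconst hready ⟨1, ∅, ∅, ∅⟩ hS0
  refine ⟨T.z, hT.1, ?_⟩
  intro t ht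
  have hnt : normTask t ∈ nts := List.mem_map.2 ⟨t, ht, rfl⟩
  have hholds : THolds T.z (normTask t) := hconc _ hnt T.z hT.2.1
  obtain ⟨a, r, b, s, d⟩ := t
  intro heq
  apply hholds
  show REv _ a (normF r s).1 = REv _ b (normF r s).2
  rw [← normF_eq_iff]
  exact heq

end Wrapper

end S17

namespace S17

section Topology

lemma genOpen_extract {α Datum : Type*} (F : Datum → Set α) {B : Set (Set α)}
    (hB : ∀ s ∈ B, ∃ d, s = F d) {U : Set α}
    (hU : TopologicalSpace.GenerateOpen B U) :
    ∀ u ∈ U, ∃ ds : List Datum, (∀ d ∈ ds, u ∈ F d) ∧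
      ∀ x, (∀ d ∈ ds, x ∈ F d) → x ∈ U := by
  induction hU with
  | basic s hs =>
      obtain ⟨d, rfl⟩ := hB s hs
      intro u hu
      exact ⟨[d], fun d' hd' => by rw [List.mem_singleton.1 hd']; exact hu,
        fun x hx => hx d (List.mem_singleton_self d)⟩
  | univ =>
      intro u _
      exact ⟨[], fun d hd => absurd hd List.not_mem_nil, fun x _ => trivial⟩
  | inter s t _ _ ihs iht =>
      intro u hu
      obtain ⟨ds, h1, h2⟩ := ihs u hu.1
      obtain ⟨es, h3, h4⟩ := iht u hu.2
      refine ⟨ds ++ es, ?_, ?_⟩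
      · intro d hd
        rcases List.mem_append.1 hd with h | h
        · exact h1 d h
        · exact h3 d h
      · intro x hx
        exact ⟨h2 x fun d hd => hx d (List.mem_append.2 (Or.inl hd)),
               h4 x fun d hd => hx d (List.mem_append.2 (Or.inr hd))⟩
  | sUnion S _ ih =>
      intro u hu
      obtain ⟨V, hV, huV⟩ := hu
      obtain ⟨ds, h1, h2⟩ := ih V hV u huV
      exact ⟨ds, h1, fun x hx => ⟨V, hV, h2 x hx⟩⟩

variable {X : Type*}

lemma REv_shift (C z a e : Equiv.Perm X) (r : List (Equiv.Perm X)) :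
    REv (C * z) a (e :: r) = REv z (a * C) (e :: r.map (fun f => f * C)) := by
  induction r generalizing e with
  | nil =>
      show a * ((C * z) * e) = (a * C) * (z * e)
      simp [mul_assoc]
  | cons f r ih =>
      show REv (C * z) a (f :: r) * ((C * z) * e) = _
      rw [ih f]
      show REv z (a * C) (f :: r.map _) * ((C * z) * e) =
        REv z (a * C) ((f * C) :: r.map _) * (z * e)
      show REv z (a * C) (r.map _) * (z * f) * ((C * z) * e) =
        REv z (a * C) (r.map _) * (z * (f * C)) * (z * e)
      simp [mul_assoc]

/-- both-sides transform of a task under `x = C * z` -/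
def tfa (C a : Equiv.Perm X) (r : List (Equiv.Perm X)) : Equiv.Perm X :=
  match r with
  | [] => a
  | _ :: _ => a * C

def tfl (C : Equiv.Perm X) (r : List (Equiv.Perm X)) : List (Equiv.Perm X) :=
  match r with
  | [] => []
  | e :: r' => e :: r'.map (fun f => f * C)

lemma REv_shift' (C z a : Equiv.Perm X) (r : List (Equiv.Perm X)) :
    REv (C * z) a r = REv z (tfa C a r) (tfl C r) := by
  cases r with
  | nil => rfl
  | cons e r => exact REv_shift C z a e r

variable (G : Subgroup (Equiv.Perm X))

abbrev SgDatum := ↥G × List ↥G × ↥G × List ↥G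

def FSet (d : SgDatum G) : Set ↥G :=
  {x | sgEval x d.1 d.2.1 ≠ sgEval x d.2.2.1 d.2.2.2}

variable {G}

lemma coe_REv (x a : ↥G) (l : List ↥G) :
    ((sgEval x a l : ↥G) : Equiv.Perm X) =
      REv (x : Equiv.Perm X) (a : Equiv.Perm X) ((l.map (fun e : ↥G => (e : Equiv.Perm X))).reverse) := by
  rw [← sgEval_eq_REv]
  have := sgEval_map G.subtype x a l
  simpa [Subgroup.coe_subtype] using this

lemma mem_FSet_iff (d : SgDatum G) (x : ↥G) :
    x ∈ FSet G d ↔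
      REv (x : Equiv.Perm X) (d.1 : Equiv.Perm X)
          ((d.2.1.map (fun e : ↥G => (e : Equiv.Perm X))).reverse) ≠
      REv (x : Equiv.Perm X) (d.2.2.1 : Equiv.Perm X)
          ((d.2.2.2.map (fun e : ↥G => (e : Equiv.Perm X))).reverse) := by
  obtain ⟨a, l, b, m⟩ := d
  show sgEval x a l ≠ sgEval x b m ↔ _
  rw [← coe_REv, ← coe_REv]
  exact (Subtype.coe_injective.ne_iff).symm

end Topology

end S17

open S17

/-- If `G` is an infinite subgroup of `Sym(X)` with no algebraicity, then the semigroup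
Zariski topology `Z(G)` is not Hausdorff and multiplication is not continuous with respect
to it. -/
theorem statement17 {X : Type*} (G : Subgroup (Equiv.Perm X)) [Infinite ↥G]
    (h : NoAlgebraicity G) :
    ¬ @T2Space ↥G (sgZariski ↥G) ∧
    ¬ @Continuous (↥G × ↥G) ↥G
        (@instTopologicalSpaceProd _ _ (sgZariski ↥G) (sgZariski ↥G)) (sgZariski ↥G)
        (fun p => p.1 * p.2) := by
  classical
  have hX : Nonempty X := by
    by_contra hne
    have hemp : IsEmpty X := not_nonempty_iff.1 hne
    have h1 : Subsingleton (Equiv.Perm X) := ⟨fun σ τ => Equiv.ext fun x => (hemp.false x).elim⟩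
    have h2 : Subsingleton ↥G := ⟨fun a b => Subtype.ext (h1.allEq _ _)⟩
    exact not_subsingleton ↥G h2
  obtain ⟨q₀⟩ := hX
  have hB : ∀ s ∈ {U : Set ↥G | ∃ (a : ↥G) (l : List ↥G) (b : ↥G) (m : List ↥G),
      U = {x | sgEval x a l ≠ sgEval x b m}}, ∃ d : SgDatum G, s = FSet G d := by
    rintro s ⟨a, l, b, m, rfl⟩
    exact ⟨(a, l, b, m), rfl⟩
  constructor
  · -- not T2
    intro h2
    obtain ⟨u, hu⟩ := exists_ne (1 : ↥G)
    obtain ⟨U, V, hUo, hVo, hUu, hV1, hdisj⟩ := @t2_separation _ (sgZariski ↥G) h2 _ _ hu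
    obtain ⟨dsU, hdsU1, hdsU2⟩ := genOpen_extract (FSet G) hB hUo u hUu
    obtain ⟨dsV, hdsV1, hdsV2⟩ := genOpen_extract (FSet G) hB hVo 1 hV1
    set tasks : List (S17.Task X) :=
      (dsU ++ dsV).map (fun d =>
        ((d.1 : Equiv.Perm X),
          (d.2.1.map (fun e : ↥G => (e : Equiv.Perm X))).reverse,
         (d.2.2.1 : Equiv.Perm X),
          (d.2.2.2.map (fun e : ↥G => (e : Equiv.Perm X))).reverse, true)) with htasks
    have hsat : ∀ t ∈ tasks, ∃ w : Equiv.Perm X,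
        REv w t.1 t.2.1 ≠ REv w t.2.2.1 t.2.2.2.1 := by
      intro t ht
      obtain ⟨d, hd, rfl⟩ := List.mem_map.1 ht
      rcases List.mem_append.1 hd with h' | h'
      · exact ⟨(u : Equiv.Perm X), (mem_FSet_iff d u).1 (hdsU1 d h')⟩
      · exact ⟨((1 : ↥G) : Equiv.Perm X), (mem_FSet_iff d 1).1 (hdsV1 d h')⟩
    obtain ⟨z, hzG, hz⟩ := master h q₀ tasks hsat
    have hmem : ∀ d ∈ dsU ++ dsV, (⟨z, hzG⟩ : ↥G) ∈ FSet G d := by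
      intro d hd
      have hth := hz _ (List.mem_map.2 ⟨d, hd, rfl⟩)
      rw [mem_FSet_iff]
      exact hth
    have hZU : (⟨z, hzG⟩ : ↥G) ∈ U :=
      hdsU2 _ (fun d hd => hmem d (List.mem_append.2 (Or.inl hd)))
    have hZV : (⟨z, hzG⟩ : ↥G) ∈ V :=
      hdsV2 _ (fun d hd => hmem d (List.mem_append.2 (Or.inr hd)))
    exact Set.disjoint_left.1 hdisj hZU hZV
  · -- multiplication not continuous
    intro hcont
    obtain ⟨c, hc1⟩ := exists_ne (1 : ↥G)
    have hOset : {x : ↥G | sgEval x 1 [1] ≠ sgEval x c []} = {w : ↥G | w ≠ c} := by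
      ext x
      simp [sgEval]
    have hOpen : @IsOpen _ (sgZariski ↥G) {w : ↥G | w ≠ c} := by
      rw [← hOset]
      exact TopologicalSpace.GenerateOpen.basic _ ⟨1, [1], c, [], rfl⟩
    have hpre : @IsOpen _ (@instTopologicalSpaceProd _ _ (sgZariski ↥G) (sgZariski ↥G))
        ((fun p : ↥G × ↥G => p.1 * p.2) ⁻¹' {w : ↥G | w ≠ c}) :=
      @Continuous.isOpen_preimage _ _ (@instTopologicalSpaceProd _ _ (sgZariski ↥G) (sgZariski ↥G)) (sgZariski ↥G) _ hcont _ hOpen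
    have hmem11 : ((1 : ↥G), (1 : ↥G)) ∈
        (fun p : ↥G × ↥G => p.1 * p.2) ⁻¹' {w : ↥G | w ≠ c} := by
      show (1 : ↥G) * 1 ≠ c
      rw [mul_one]
      exact Ne.symm hc1
    obtain ⟨U, V, hUo, hVo, hU1, hV1, hUV⟩ :=
      (@isOpen_prod_iff _ _ (sgZariski ↥G) (sgZariski ↥G) _).1 hpre 1 1 hmem11
    obtain ⟨dsU, hdsU1, hdsU2⟩ := genOpen_extract (FSet G) hB hUo 1 hU1
    obtain ⟨dsV, hdsV1, hdsV2⟩ := genOpen_extract (FSet G) hB hVo 1 hV1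
    set C : Equiv.Perm X := (c : Equiv.Perm X) with hC
    set tasks : List (S17.Task X) :=
      (dsU.map (fun d =>
        (tfa C (d.1 : Equiv.Perm X)
            ((d.2.1.map (fun e : ↥G => (e : Equiv.Perm X))).reverse),
         tfl C ((d.2.1.map (fun e : ↥G => (e : Equiv.Perm X))).reverse),
         tfa C (d.2.2.1 : Equiv.Perm X)
            ((d.2.2.2.map (fun e : ↥G => (e : Equiv.Perm X))).reverse),
         tfl C ((d.2.2.2.map (fun e : ↥G => (e : Equiv.Perm X))).reverse), true))) ++
      (dsV.map (fun d =>
        ((d.1 : Equiv.Perm X),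
          (d.2.1.map (fun e : ↥G => (e : Equiv.Perm X))).reverse,
         (d.2.2.1 : Equiv.Perm X),
          (d.2.2.2.map (fun e : ↥G => (e : Equiv.Perm X))).reverse, false))) with htasks
    have hsat : ∀ t ∈ tasks, ∃ w : Equiv.Perm X,
        REv w t.1 t.2.1 ≠ REv w t.2.2.1 t.2.2.2.1 := by
      intro t ht
      rcases List.mem_append.1 ht with h' | h'
      · obtain ⟨d, hd, rfl⟩ := List.mem_map.1 h'
        refine ⟨C⁻¹, ?_⟩
        show REv C⁻¹ (tfa C _ _) (tfl C _) ≠ REv C⁻¹ (tfa C _ _) (tfl C _)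
        rw [← REv_shift', ← REv_shift', mul_inv_cancel]
        have := (mem_FSet_iff d 1).1 (hdsU1 d hd)
        rwa [OneMemClass.coe_one] at this
      · obtain ⟨d, hd, rfl⟩ := List.mem_map.1 h'
        refine ⟨((1 : ↥G) : Equiv.Perm X), ?_⟩
        exact (mem_FSet_iff d 1).1 (hdsV1 d hd)
    obtain ⟨z, hzG, hz⟩ := master h q₀ tasks hsat
    set ζ : ↥G := ⟨z, hzG⟩ with hζ
    have hxU : c * ζ ∈ U := by
      apply hdsU2
      intro d hd
      rw [mem_FSet_iff]
      have hcoe : ((c * ζ : ↥G) : Equiv.Perm X) = C * z := by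
        rw [Subgroup.coe_mul]
      rw [hcoe, REv_shift', REv_shift']
      have hth := hz _ (List.mem_append.2 (Or.inl (List.mem_map.2 ⟨d, hd, rfl⟩)))
      exact hth
    have hyV : ζ⁻¹ ∈ V := by
      apply hdsV2
      intro d hd
      rw [mem_FSet_iff]
      have hcoe : ((ζ⁻¹ : ↥G) : Equiv.Perm X) = z⁻¹ := by
        rw [InvMemClass.coe_inv]
      rw [hcoe]
      have hth := hz _ (List.mem_append.2 (Or.inr (List.mem_map.2 ⟨d, hd, rfl⟩)))
      exact hth
    have hne : (c * ζ) * ζ⁻¹ ≠ c := hUV (Set.mk_mem_prod hxU hyV)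
    exact hne (mul_inv_cancel_right c ζ)
end

section
/- Let S be a cancellative monoid and let A, B be k-rowed ragged matrices over S such that N_{A,B} is nonempty. Then there exist m ∈ ℕ and m-rowed ragged matrices P, Q over S such that N_{P,Q} = N_{A,B} and for every i < m: the rows P_i and Q_i do not both have degree 0 (i.e., at least one of them has length greater than 1), and the first entries of P_i and Q_i are distinct. Consequently, the nonempty sets N_{P,Q} with P, Q satisfying these two conditions form a basis of the semigroup Zariski topology on S. -/
open Topology TopologicalSpace

/-- `N_{A,B}`, for two `k`-rowed ragged matrices `A, B` over a monoid `M`. A row is encoded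
as a pair `(a, l) : M × List M` standing for the nonempty tuple `a :: l`, of degree
`l.length`, with row evaluation `sgEval x a l = a * (x * l₀) * (x * l₁) * ⋯`. -/
def NAB {M : Type*} [Monoid M] {k : ℕ} (A B : Fin k → M × List M) : Set M :=
  {x | ∀ i : Fin k, sgEval x (A i).1 (A i).2 ≠ sgEval x (B i).1 (B i).2}




lemma sgEval_nil {M : Type*} [Monoid M] (x a : M) : sgEval x a [] = a := by
  simp [sgEval]

lemma sgEval_cons {M : Type*} [Monoid M] (x a b : M) (l : List M) :
    sgEval x a (b :: l) = a * (x * sgEval x b l) := by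
  simp [sgEval, mul_assoc]

lemma sgEval_eq {M : Type*} [Monoid M] (x a : M) (l : List M) :
    sgEval x a l = a * sgEval x 1 l := by
  simp [sgEval, mul_assoc]

def mulLast {M : Type*} [Monoid M] : List M → M → List M
  | [], _ => []
  | [b], s => [b * s]
  | b :: c :: l, s => b :: mulLast (c :: l) s

lemma mulLast_ne_nil {M : Type*} [Monoid M] {l : List M} (h : l ≠ []) (s : M) :
    mulLast l s ≠ [] := by
  match l with
  | [] => exact absurd rfl h
  | [b] => simp [mulLast]
  | b :: c :: l => simp [mulLast]

lemma sgEval_mulLast {M : Type*} [Monoid M] (x s : M) :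
    ∀ (l : List M) (a : M), l ≠ [] → sgEval x a (mulLast l s) = sgEval x a l * s
  | [], a, h => absurd rfl h
  | [b], a, _ => by simp [mulLast, sgEval_cons, sgEval_nil, mul_assoc]
  | b :: c :: l, a, _ => by
      rw [show mulLast (b :: c :: l) s = b :: mulLast (c :: l) s from rfl,
        sgEval_cons, sgEval_cons, sgEval_mulLast x s (c :: l) b (by simp),
        mul_assoc, mul_assoc]

lemma rowNorm {S : Type*} [CancelMonoid S] :
    ∀ (n : ℕ) (a b : S) (l m : List S), l.length + m.length ≤ n →
    (∃ x, sgEval x a l ≠ sgEval x b m) →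
    (∀ x, sgEval x a l ≠ sgEval x b m) ∨
    ∃ (p q : S × List S), ((p.2 ≠ [] ∨ q.2 ≠ []) ∧ p.1 ≠ q.1) ∧
      ∀ x, (sgEval x p.1 p.2 ≠ sgEval x q.1 q.2 ↔ sgEval x a l ≠ sgEval x b m) := by
  intro n
  induction n with
  | zero =>
    intro a b l m hlen hw
    have hl : l = [] := List.eq_nil_of_length_eq_zero (by omega)
    have hm : m = [] := List.eq_nil_of_length_eq_zero (by omega)
    subst hl; subst hm
    by_cases hab : a = b
    · obtain ⟨x, hx⟩ := hw
      rw [sgEval_nil, sgEval_nil] at hx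
      exact absurd hab hx
    · left; intro x; rw [sgEval_nil, sgEval_nil]; exact hab
  | succ n ih =>
    intro a b l m hlen hw
    by_cases hab : a = b
    · subst hab
      cases l with
      | nil =>
        cases m with
        | nil =>
          obtain ⟨x, hx⟩ := hw
          rw [sgEval_nil] at hx
          exact absurd rfl hx
        | cons m₀ mt =>
          obtain ⟨x₀, hx₀⟩ := hw
          set s := sgEval x₀ 1 (m₀ :: mt) with hs_def
          have hs : s ≠ 1 := by
            intro h1
            apply hx₀
            rw [sgEval_nil, sgEval_eq x₀ a (m₀ :: mt), ← hs_def, h1, mul_one]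
          have key : ∀ x : S,
              (s ≠ sgEval x 1 (mulLast (m₀ :: mt) s) ↔
               sgEval x a [] ≠ sgEval x a (m₀ :: mt)) := by
            intro x
            rw [sgEval_mulLast x s (m₀ :: mt) 1 (by simp), sgEval_nil,
              sgEval_eq x a (m₀ :: mt)]
            simp only [ne_eq, not_iff_not]
            constructor
            · intro h
              have h1 : (1 : S) = sgEval x 1 (m₀ :: mt) :=
                mul_right_cancel (b := s) (by rw [one_mul]; exact h)
              rw [← h1, mul_one]
            · intro h
              have h1 : (1 : S) = sgEval x 1 (m₀ :: mt) :=
                mul_left_cancel (a := a) (by rw [mul_one]; exact h)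
              rw [← h1, one_mul]
          right
          exact ⟨(s, []), (1, mulLast (m₀ :: mt) s),
            ⟨Or.inr (mulLast_ne_nil (by simp) s), hs⟩,
            fun x => by rw [sgEval_nil]; exact key x⟩
      | cons l₀ lt =>
        cases m with
        | nil =>
          obtain ⟨x₀, hx₀⟩ := hw
          set s := sgEval x₀ 1 (l₀ :: lt) with hs_def
          have hs : s ≠ 1 := by
            intro h1
            apply hx₀
            rw [sgEval_nil, sgEval_eq x₀ a (l₀ :: lt), ← hs_def, h1, mul_one]
          have key : ∀ x : S,
              (sgEval x 1 (mulLast (l₀ :: lt) s) ≠ s ↔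
               sgEval x a (l₀ :: lt) ≠ sgEval x a []) := by
            intro x
            rw [sgEval_mulLast x s (l₀ :: lt) 1 (by simp), sgEval_nil,
              sgEval_eq x a (l₀ :: lt)]
            simp only [ne_eq, not_iff_not]
            constructor
            · intro h
              have h1 : sgEval x 1 (l₀ :: lt) = (1 : S) :=
                mul_right_cancel (b := s) (by rw [one_mul]; exact h)
              rw [h1, mul_one]
            · intro h
              have h1 : sgEval x 1 (l₀ :: lt) = (1 : S) :=
                mul_left_cancel (a := a) (by rw [mul_one]; exact h)
              rw [h1, one_mul]
          right
          exact ⟨(1, mulLast (l₀ :: lt) s), (s, []),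
            ⟨Or.inl (mulLast_ne_nil (by simp) s), hs.symm⟩,
            fun x => by rw [sgEval_nil (a := s)]; exact key x⟩
        | cons m₀ mt =>
          have key : ∀ x : S, (sgEval x l₀ lt ≠ sgEval x m₀ mt ↔
              sgEval x a (l₀ :: lt) ≠ sgEval x a (m₀ :: mt)) := by
            intro x
            rw [sgEval_cons, sgEval_cons]
            simp only [ne_eq, not_iff_not]
            constructor
            · intro h; rw [h]
            · intro h; exact mul_left_cancel (mul_left_cancel h)
          obtain ⟨x₀, hx₀⟩ := hw
          rcases ih l₀ m₀ lt mt (by simp only [List.length_cons] at hlen; omega)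
              ⟨x₀, (key x₀).mpr hx₀⟩ with hL | ⟨p, q, hc, hiff⟩
          · left; intro x; exact (key x).mp (hL x)
          · right; exact ⟨p, q, hc, fun x => (hiff x).trans (key x)⟩
    · by_cases hlm : l = [] ∧ m = []
      · obtain ⟨rfl, rfl⟩ := hlm
        left; intro x; rw [sgEval_nil, sgEval_nil]; exact hab
      · right
        refine ⟨(a, l), (b, m), ⟨?_, hab⟩, fun x => Iff.rfl⟩
        rw [not_and_or] at hlm
        exact hlm

lemma matNorm {S : Type*} [CancelMonoid S] {k : ℕ} (A B : Fin k → S × List S)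
    (h : (NAB A B).Nonempty) :
    ∃ (m : ℕ) (P Q : Fin m → S × List S), NAB P Q = NAB A B ∧
      ∀ i : Fin m, ((P i).2 ≠ [] ∨ (Q i).2 ≠ []) ∧ (P i).1 ≠ (Q i).1 := by
  obtain ⟨x₀, hx₀⟩ := h
  simp only [NAB, Set.mem_setOf_eq] at hx₀
  by_cases hall : ∀ i x, sgEval x (A i).1 (A i).2 ≠ sgEval x (B i).1 (B i).2
  · refine ⟨0, Fin.elim0, Fin.elim0, ?_, fun i => i.elim0⟩
    ext y
    simp only [NAB, Set.mem_setOf_eq]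
    exact ⟨fun _ i => hall i y, fun _ i => i.elim0⟩
  · push_neg at hall
    obtain ⟨i₀, x₁, hx₁⟩ := hall
    rcases rowNorm ((A i₀).2.length + (B i₀).2.length) (A i₀).1 (B i₀).1 (A i₀).2
        (B i₀).2 le_rfl ⟨x₀, hx₀ i₀⟩ with hL | ⟨p₀, q₀, hc₀, hiff₀⟩
    · exact absurd hx₁ (hL x₁)
    · have H : ∀ i, ∃ p q : S × List S, ((p.2 ≠ [] ∨ q.2 ≠ []) ∧ p.1 ≠ q.1) ∧
          (∀ x, sgEval x p.1 p.2 ≠ sgEval x q.1 q.2 →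
            sgEval x (A i).1 (A i).2 ≠ sgEval x (B i).1 (B i).2) ∧
          (∀ x, (∀ j, sgEval x (A j).1 (A j).2 ≠ sgEval x (B j).1 (B j).2) →
            sgEval x p.1 p.2 ≠ sgEval x q.1 q.2) := by
        intro i
        rcases rowNorm ((A i).2.length + (B i).2.length) (A i).1 (B i).1 (A i).2
            (B i).2 le_rfl ⟨x₀, hx₀ i⟩ with hL | ⟨p, q, hc, hiff⟩
        · exact ⟨p₀, q₀, hc₀, fun x _ => hL x, fun x hx => (hiff₀ x).mpr (hx i₀)⟩
        · exact ⟨p, q, hc, fun x hpx => (hiff x).mp hpx, fun x hx => (hiff x).mpr (hx i)⟩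
      choose P Q hc h1 h2 using H
      refine ⟨k, P, Q, ?_, hc⟩
      ext y
      simp only [NAB, Set.mem_setOf_eq]
      exact ⟨fun hy i => h1 i y (hy i), fun hy i => h2 i y hy⟩


/-- For a cancellative monoid `S` and ragged matrices `A, B` with `N_{A,B}` nonempty, there
are ragged matrices `P, Q` with `N_{P,Q} = N_{A,B}` such that in every row at least one of
`P, Q` has positive degree and the first entries of `P` and `Q` differ. Consequently, the
nonempty sets `N_{P,Q}` with `P, Q` of this form are a basis of the semigroup Zariski
topology on `S`. -/
theorem statement18 {S : Type*} [CancelMonoid S] {k : ℕ} (A B : Fin k → S × List S)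
    (h : (NAB A B).Nonempty) :
    (∃ (m : ℕ) (P Q : Fin m → S × List S),
      NAB P Q = NAB A B ∧
      ∀ i : Fin m, ((P i).2 ≠ [] ∨ (Q i).2 ≠ []) ∧ (P i).1 ≠ (Q i).1) ∧
    @TopologicalSpace.IsTopologicalBasis S (sgZariski S)
      {U | ∃ (m : ℕ) (P Q : Fin m → S × List S),
        (∀ i : Fin m, ((P i).2 ≠ [] ∨ (Q i).2 ≠ []) ∧ (P i).1 ≠ (Q i).1) ∧
        U = NAB P Q ∧ U.Nonempty} := by
  refine ⟨matNorm A B h, ?_⟩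
  letI : TopologicalSpace S := sgZariski S
  have hgen : sgZariski S = generateFrom {U | ∃ (a : S) (l : List S) (b : S) (m : List S),
      U = {x | sgEval x a l ≠ sgEval x b m}} := rfl
  refine isTopologicalBasis_of_isOpen_of_nhds ?_ ?_
  · rintro U ⟨m, P, Q, hcond, rfl, hne⟩
    have hU : NAB P Q = ⋂ i : Fin m,
        {x | sgEval x (P i).1 (P i).2 ≠ sgEval x (Q i).1 (Q i).2} := by
      ext y; simp [NAB]
    rw [hU]
    refine isOpen_iInter_of_finite fun i => ?_
    exact TopologicalSpace.isOpen_generateFrom_of_mem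
      ⟨(P i).1, (P i).2, (Q i).1, (Q i).2, rfl⟩
  · intro x U hxU hU
    have B0 := TopologicalSpace.isTopologicalBasis_of_subbasis (α := S) hgen
    obtain ⟨V, hV, hxV, hVU⟩ := B0.exists_subset_of_mem_open hxU hU
    obtain ⟨F, ⟨hFfin, hFsub⟩, rfl⟩ := hV
    set n := hFfin.toFinset.card with hn
    let e : Fin n ≃ {u // u ∈ hFfin.toFinset} := (hFfin.toFinset.equivFin).symm
    have hmemF : ∀ i : Fin n, ((e i : Set S) ∈ F) := fun i => by
      have := (e i).2
      rwa [Set.Finite.mem_toFinset] at this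
    have hmem : ∀ i : Fin n, ∃ (a : S) (l : List S) (b : S) (m : List S),
        (e i : Set S) = {x | sgEval x a l ≠ sgEval x b m} := fun i => hFsub (hmemF i)
    choose a l b m hset using hmem
    set A' : Fin n → S × List S := fun i => (a i, l i) with hA'
    set B' : Fin n → S × List S := fun i => (b i, m i) with hB'
    have hFN : ⋂₀ F = NAB A' B' := by
      ext y
      simp only [Set.mem_sInter, NAB, Set.mem_setOf_eq]
      constructor
      · intro hy i
        have := hy (e i) (hmemF i)
        rw [hset i] at this
        exact this
      · intro hy u hu
        have hueq : u = (e (e.symm ⟨u, (Set.Finite.mem_toFinset hFfin).mpr hu⟩) : Set S) := by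
          rw [Equiv.apply_symm_apply]
        rw [hueq, hset]
        exact hy _
    have hne : (NAB A' B').Nonempty := ⟨x, hFN ▸ hxV⟩
    obtain ⟨m', P, Q, hPQ, hcond⟩ := matNorm A' B' hne
    refine ⟨NAB P Q, ⟨m', P, Q, hcond, rfl, hPQ ▸ hne⟩, ?_, ?_⟩
    · rw [hPQ, ← hFN]; exact hxV
    · rw [hPQ, ← hFN]; exact hVU
end
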